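/- arXiv:1411.0648 — 5 statements merged into one kernel-verified Lean document; each statement's English description precedes it below -/
import Mathlib

section
/- For α > 0, c > 0, the function v(x,t) = (ct)^{1-2α}/B(α,1/2) · (c²t² - x²)^{α-1}, defined for |x| < ct, satisfies the Euler–Poisson–Darboux equation ∂²v/∂t² + (2α/t)·∂v/∂t = c²·∂²v/∂x² at every point (x,t) with t > 0 and |x| < ct. -/
open Real

/-- Beta function `B(a,b) = Γ(a)Γ(b)/Γ(a+b)`. -/
noncomputable def realBeta (a b : ℝ) : ℝ := Real.Gamma a * Real.Gamma b / Real.Gamma (a + b)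

/-- The EPD fundamental density. -/
noncomputable def epdDensity (α c : ℝ) (x t : ℝ) : ℝ :=
  (c * t) ^ (1 - 2 * α) / realBeta α (1 / 2) * (c ^ 2 * t ^ 2 - x ^ 2) ^ (α - 1)

section epdAux

/-- positivity of `c²s² - x²` in the light cone -/
lemma epd_upos {c x s : ℝ} (hc : 0 < c) (hs : 0 < s) (hxs : |x| < c * s) :
    0 < c ^ 2 * s ^ 2 - x ^ 2 := by
  nlinarith [sq_abs x, abs_nonneg x]

/-- the first `t`-derivative of the (unnormalised) density -/
noncomputable def epdG1 (α c x : ℝ) : ℝ → ℝ := fun s =>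
  c * (1 - 2 * α) * (c * s) ^ (-(2 * α)) * (c ^ 2 * s ^ 2 - x ^ 2) ^ (α - 1)
    + (c * s) ^ (1 - 2 * α) * (2 * c ^ 2 * s * ((α - 1) * (c ^ 2 * s ^ 2 - x ^ 2) ^ (α - 2)))

lemma epd_hasDerivAt_W (α c x : ℝ) (hc : 0 < c) {s : ℝ} (hs : 0 < s) (hxs : |x| < c * s) :
    HasDerivAt (fun r : ℝ => (c * r) ^ (1 - 2 * α) * (c ^ 2 * r ^ 2 - x ^ 2) ^ (α - 1))
      (epdG1 α c x s) s := by
  have hcs : (0:ℝ) < c * s := mul_pos hc hs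
  have hu : (0:ℝ) < c ^ 2 * s ^ 2 - x ^ 2 := epd_upos hc hs hxs
  have h1 : HasDerivAt (fun r : ℝ => (c * r) ^ (1 - 2 * α))
      (c * 1 * (1 - 2 * α) * (c * s) ^ (1 - 2 * α - 1)) s :=
    ((hasDerivAt_id s).const_mul c).rpow_const (Or.inl hcs.ne')
  have h2 : HasDerivAt (fun r : ℝ => (c ^ 2 * r ^ 2 - x ^ 2) ^ (α - 1))
      ((c ^ 2 * (↑2 * s ^ 1)) * (α - 1) * (c ^ 2 * s ^ 2 - x ^ 2) ^ (α - 1 - 1)) s :=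
    (((hasDerivAt_pow 2 s).const_mul (c ^ 2)).sub_const (x ^ 2)).rpow_const (Or.inl hu.ne')
  have h3 := h1.mul h2
  convert h3 using 1
  · rfl
  · rfl
  · rfl
  have e1 : 1 - 2 * α - 1 = -(2 * α) := by ring
  have e2 : α - 1 - 1 = α - 2 := by ring
  rw [e1, e2]
  unfold epdG1
  push_cast
  ring

/-- the second `t`-derivative value -/
noncomputable def epdG2 (α c x t : ℝ) : ℝ :=
  c ^ 2 * (1 - 2 * α) * (-(2 * α)) * (c * t) ^ (-(2 * α) - 1) * (c ^ 2 * t ^ 2 - x ^ 2) ^ (α - 1)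
    + c * (1 - 2 * α) * (c * t) ^ (-(2 * α)) * (2 * c ^ 2 * t * (α - 1) * (c ^ 2 * t ^ 2 - x ^ 2) ^ (α - 2))
    + c * (1 - 2 * α) * (c * t) ^ (-(2 * α)) * (2 * c ^ 2 * t * (α - 1) * (c ^ 2 * t ^ 2 - x ^ 2) ^ (α - 2))
    + (c * t) ^ (1 - 2 * α) *
        (2 * c ^ 2 * (α - 1) * (c ^ 2 * t ^ 2 - x ^ 2) ^ (α - 2)
          + 4 * c ^ 4 * t ^ 2 * (α - 1) * (α - 2) * (c ^ 2 * t ^ 2 - x ^ 2) ^ (α - 3))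

lemma epd_hasDerivAt_G1 (α c x : ℝ) (hc : 0 < c) {t : ℝ} (ht : 0 < t) (hx : |x| < c * t) :
    HasDerivAt (epdG1 α c x) (epdG2 α c x t) t := by
  have hcs : (0:ℝ) < c * t := mul_pos hc ht
  have hu : (0:ℝ) < c ^ 2 * t ^ 2 - x ^ 2 := epd_upos hc ht hx
  have hA : HasDerivAt (fun s : ℝ => (c * s) ^ (-(2 * α)))
      (c * 1 * (-(2 * α)) * (c * t) ^ (-(2 * α) - 1)) t :=
    ((hasDerivAt_id t).const_mul c).rpow_const (Or.inl hcs.ne')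
  have hB : HasDerivAt (fun s : ℝ => (c ^ 2 * s ^ 2 - x ^ 2) ^ (α - 1))
      ((c ^ 2 * (↑2 * t ^ 1)) * (α - 1) * (c ^ 2 * t ^ 2 - x ^ 2) ^ (α - 1 - 1)) t :=
    (((hasDerivAt_pow 2 t).const_mul (c ^ 2)).sub_const (x ^ 2)).rpow_const (Or.inl hu.ne')
  have hP : HasDerivAt (fun s : ℝ => (c * s) ^ (1 - 2 * α))
      (c * 1 * (1 - 2 * α) * (c * t) ^ (1 - 2 * α - 1)) t :=
    ((hasDerivAt_id t).const_mul c).rpow_const (Or.inl hcs.ne')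
  have hf : HasDerivAt (fun s : ℝ => 2 * c ^ 2 * s) (2 * c ^ 2 * 1) t :=
    (hasDerivAt_id t).const_mul (2 * c ^ 2)
  have hg : HasDerivAt (fun s : ℝ => (α - 1) * (c ^ 2 * s ^ 2 - x ^ 2) ^ (α - 2))
      ((α - 1) * ((c ^ 2 * (↑2 * t ^ 1)) * (α - 2) * (c ^ 2 * t ^ 2 - x ^ 2) ^ (α - 2 - 1))) t :=
    ((((hasDerivAt_pow 2 t).const_mul (c ^ 2)).sub_const (x ^ 2)).rpow_const
      (Or.inl hu.ne')).const_mul (α - 1)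
  have htot := ((hA.const_mul (c * (1 - 2 * α))).mul hB).add (hP.mul (hf.mul hg))
  convert htot using 1
  · rfl
  · rfl
  · rfl
  have e1 : 1 - 2 * α - 1 = -(2 * α) := by ring
  have e2 : α - 1 - 1 = α - 2 := by ring
  have e3 : α - 2 - 1 = α - 3 := by ring
  rw [e1, e2, e3]
  unfold epdG2
  simp only [Pi.mul_apply]
  push_cast
  ring

/-- the second `x`-derivative value -/
noncomputable def epdX2 (α c x t : ℝ) : ℝ :=
  (c * t) ^ (1 - 2 * α) *
    (-(2 * (α - 1)) * (c ^ 2 * t ^ 2 - x ^ 2) ^ (α - 2)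
      + 4 * x ^ 2 * (α - 1) * (α - 2) * (c ^ 2 * t ^ 2 - x ^ 2) ^ (α - 3))

lemma epd_hasDerivAt_Wx (α c t : ℝ) (hc : 0 < c) (ht : 0 < t) {r : ℝ} (hxr : |r| < c * t) :
    HasDerivAt (fun r : ℝ => (c * t) ^ (1 - 2 * α) * (c ^ 2 * t ^ 2 - r ^ 2) ^ (α - 1))
      ((c * t) ^ (1 - 2 * α) * (-(2 * r) * ((α - 1) * (c ^ 2 * t ^ 2 - r ^ 2) ^ (α - 2)))) r := by
  have hu : (0:ℝ) < c ^ 2 * t ^ 2 - r ^ 2 := epd_upos hc ht hxr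
  have hw : HasDerivAt (fun y : ℝ => (c ^ 2 * t ^ 2 - y ^ 2) ^ (α - 1))
      ((-(↑2 * r ^ 1)) * (α - 1) * (c ^ 2 * t ^ 2 - r ^ 2) ^ (α - 1 - 1)) r :=
    ((hasDerivAt_pow 2 r).const_sub (c ^ 2 * t ^ 2)).rpow_const (Or.inl hu.ne')
  have htot := hw.const_mul ((c * t) ^ (1 - 2 * α))
  convert htot using 1
  · rfl
  · rfl
  have e2 : α - 1 - 1 = α - 2 := by ring
  rw [e2]
  push_cast
  ring

lemma epd_hasDerivAt_X1 (α c t : ℝ) (hc : 0 < c) (ht : 0 < t) {x : ℝ} (hx : |x| < c * t) :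
    HasDerivAt (fun r : ℝ =>
        (c * t) ^ (1 - 2 * α) * (-(2 * r) * ((α - 1) * (c ^ 2 * t ^ 2 - r ^ 2) ^ (α - 2))))
      (epdX2 α c x t) x := by
  have hu : (0:ℝ) < c ^ 2 * t ^ 2 - x ^ 2 := epd_upos hc ht hx
  have hf : HasDerivAt (fun r : ℝ => -(2 * r)) (-(2 * 1)) x :=
    ((hasDerivAt_id x).const_mul 2).neg
  have hg : HasDerivAt (fun r : ℝ => (α - 1) * (c ^ 2 * t ^ 2 - r ^ 2) ^ (α - 2))
      ((α - 1) * ((-(↑2 * x ^ 1)) * (α - 2) * (c ^ 2 * t ^ 2 - x ^ 2) ^ (α - 2 - 1))) x :=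
    (((hasDerivAt_pow 2 x).const_sub (c ^ 2 * t ^ 2)).rpow_const (Or.inl hu.ne')).const_mul (α - 1)
  have htot := (hf.mul hg).const_mul ((c * t) ^ (1 - 2 * α))
  convert htot using 1
  · rfl
  · rfl
  · rfl
  have e3 : α - 2 - 1 = α - 3 := by ring
  rw [e3]
  unfold epdX2
  push_cast
  ring

end epdAux

/-- the EPD density solves the Euler–Poisson–Darboux equation
`∂²v/∂t² + (2α/t) ∂v/∂t = c² ∂²v/∂x²` on `{t > 0, |x| < ct}`. -/
theorem epd_density_solves_EPD (α c : ℝ) (hα : 0 < α) (hc : 0 < c)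
    (x t : ℝ) (ht : 0 < t) (hx : |x| < c * t) :
    deriv (fun s => deriv (fun r => epdDensity α c x r) s) t
      + (2 * α / t) * deriv (fun r => epdDensity α c x r) t
      = c ^ 2 * deriv (fun s => deriv (fun r => epdDensity α c r t) s) x := by
  have hcs : (0:ℝ) < c * t := mul_pos hc ht
  have hu : (0:ℝ) < c ^ 2 * t ^ 2 - x ^ 2 := epd_upos hc ht hx
  set K : ℝ := (realBeta α (1/2))⁻¹ with hK
  have hEt : (fun r => epdDensity α c x r)
      = fun r => K * ((c * r) ^ (1 - 2 * α) * (c ^ 2 * r ^ 2 - x ^ 2) ^ (α - 1)) := by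
    funext r
    simp only [epdDensity, hK]
    rw [div_mul_eq_mul_div, div_eq_inv_mul]
  have hEx : (fun r => epdDensity α c r t)
      = fun r => K * ((c * t) ^ (1 - 2 * α) * (c ^ 2 * t ^ 2 - r ^ 2) ^ (α - 1)) := by
    funext r
    simp only [epdDensity, hK]
    rw [div_mul_eq_mul_div, div_eq_inv_mul]
  -- first t-derivative
  have hd1 : deriv (fun r => epdDensity α c x r) t = K * epdG1 α c x t := by
    rw [hEt, deriv_const_mul_field, (epd_hasDerivAt_W α c x hc ht hx).deriv]
  -- second t-derivative
  have hfun : (fun s => deriv (fun r => epdDensity α c x r) s)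
      = fun s => K * deriv
          (fun r => (c * r) ^ (1 - 2 * α) * (c ^ 2 * r ^ 2 - x ^ 2) ^ (α - 1)) s := by
    funext s
    rw [hEt, deriv_const_mul_field]
  have hopen : IsOpen {s : ℝ | 0 < s ∧ |x| < c * s} :=
    (isOpen_lt continuous_const continuous_id).and
      (isOpen_lt continuous_const (continuous_const.mul continuous_id))
  have hev : (fun s => deriv
        (fun r => (c * r) ^ (1 - 2 * α) * (c ^ 2 * r ^ 2 - x ^ 2) ^ (α - 1)) s)
      =ᶠ[nhds t] epdG1 α c x := by
    filter_upwards [hopen.mem_nhds ⟨ht, hx⟩] with s hs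
    exact (epd_hasDerivAt_W α c x hc hs.1 hs.2).deriv
  have hd2 : deriv (fun s => deriv (fun r => epdDensity α c x r) s) t
      = K * epdG2 α c x t := by
    rw [hfun, deriv_const_mul_field, hev.deriv_eq, (epd_hasDerivAt_G1 α c x hc ht hx).deriv]
  -- second x-derivative
  have hfunx : (fun s => deriv (fun r => epdDensity α c r t) s)
      = fun s => K * deriv
          (fun r => (c * t) ^ (1 - 2 * α) * (c ^ 2 * t ^ 2 - r ^ 2) ^ (α - 1)) s := by
    funext s
    rw [hEx, deriv_const_mul_field]
  have hopenx : IsOpen {r : ℝ | |r| < c * t} := isOpen_lt continuous_abs continuous_const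
  have hevx : (fun s => deriv
        (fun r => (c * t) ^ (1 - 2 * α) * (c ^ 2 * t ^ 2 - r ^ 2) ^ (α - 1)) s)
      =ᶠ[nhds x] fun r =>
        (c * t) ^ (1 - 2 * α) * (-(2 * r) * ((α - 1) * (c ^ 2 * t ^ 2 - r ^ 2) ^ (α - 2))) := by
    filter_upwards [hopenx.mem_nhds hx] with r hr
    exact (epd_hasDerivAt_Wx α c t hc ht hr).deriv
  have hdx2 : deriv (fun s => deriv (fun r => epdDensity α c r t) s) x
      = K * epdX2 α c x t := by
    rw [hfunx, deriv_const_mul_field, hevx.deriv_eq, (epd_hasDerivAt_X1 α c t hc ht hx).deriv]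
  rw [hd1, hd2, hdx2]
  -- it remains to check the algebraic identity
  have key : epdG2 α c x t + 2 * α / t * epdG1 α c x t = c ^ 2 * epdX2 α c x t := by
    have ha2 : (c * t) ^ (1 - 2 * α) = (c * t) ^ (-(2 * α)) * (c * t) := by
      rw [← Real.rpow_add_one hcs.ne' (-(2 * α))]
      congr 1; ring
    have ha1 : (c * t) ^ (-(2 * α)) = (c * t) ^ (-(2 * α) - 1) * (c * t) := by
      rw [← Real.rpow_add_one hcs.ne' (-(2 * α) - 1)]
      congr 1; ring
    have hu1 : (c ^ 2 * t ^ 2 - x ^ 2) ^ (α - 1)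
        = (c ^ 2 * t ^ 2 - x ^ 2) ^ (α - 2) * (c ^ 2 * t ^ 2 - x ^ 2) := by
      rw [← Real.rpow_add_one hu.ne' (α - 2)]
      congr 1; ring
    have hu2 : (c ^ 2 * t ^ 2 - x ^ 2) ^ (α - 2)
        = (c ^ 2 * t ^ 2 - x ^ 2) ^ (α - 3) * (c ^ 2 * t ^ 2 - x ^ 2) := by
      rw [← Real.rpow_add_one hu.ne' (α - 3)]
      congr 1; ring
    unfold epdG1 epdG2 epdX2
    rw [ha2, hu1, hu2, ha1]
    field_simp
    ring
  linear_combination K * key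
end

section
/- Let f : ℝ → ℝ be twice continuously differentiable and let w(x,t) = (f(x+ct) + f(x-ct))/2 be the D'Alembert solution of the wave equation with initial datum f and zero initial velocity. Then for α > 0 the Erdélyi–Kober average v(x,t) = (2/B(α,1/2)) ∫₀¹ (1-u²)^{α-1} w(x, ut) du satisfies the Euler–Poisson–Darboux equation ∂²v/∂t² + (2α/t)·∂v/∂t = c²·∂²v/∂x² for t > 0, with v(x,0) = f(x). -/
open Real intervalIntegral

open MeasureTheory Set Metric

lemma weight_integrable {α : ℝ} (hα : 0 < α) :
    IntervalIntegrable (fun u : ℝ => (1 - u ^ 2) ^ (α - 1)) volume 0 1 := by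
  have h1 : IntervalIntegrable (fun x : ℝ => x ^ (α - 1)) volume 0 1 :=
    intervalIntegrable_rpow' (by linarith)
  have h2 : IntervalIntegrable (fun x : ℝ => (1 - x) ^ (α - 1)) volume 0 1 :=
    ((h1.comp_sub_left 1).symm : ) |>.mono_set (by norm_num)
  set C : ℝ := max 1 ((2:ℝ) ^ (α - 1)) with hC
  have hC0 : 0 < C := lt_max_of_lt_left one_pos
  have h3 : IntervalIntegrable (fun x : ℝ => C * (1 - x) ^ (α - 1)) volume 0 1 :=
    h2.const_mul C
  refine h3.mono_fun ?_ ?_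
  · exact ((measurable_const.sub ((measurable_id.pow_const 2))).pow_const _).aestronglyMeasurable
  · rw [Filter.EventuallyLE, ae_restrict_iff' measurableSet_uIoc]
    filter_upwards with u hu
    rw [Set.uIoc_of_le (by norm_num : (0:ℝ) ≤ 1)] at hu
    obtain ⟨hu0, hu1⟩ := hu
    have hb : (0:ℝ) ≤ 1 - u := by linarith
    have hb2 : (0:ℝ) ≤ 1 + u := by linarith
    have key : (1 - u ^ 2) ^ (α - 1) = (1 - u) ^ (α - 1) * (1 + u) ^ (α - 1) := by
      rw [← Real.mul_rpow hb hb2]; ring_nf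
    have hfac : (1 + u) ^ (α - 1) ≤ C := by
      rcases le_or_gt 1 α with h | h
      · refine le_trans (Real.rpow_le_rpow hb2 (by linarith) (by linarith)) (le_max_right _ _)
      · exact le_trans (Real.rpow_le_one_of_one_le_of_nonpos (by linarith) (by linarith))
          (le_max_left _ _)
    have hn1 : (0:ℝ) ≤ (1 - u ^ 2) ^ (α - 1) := Real.rpow_nonneg (by nlinarith) _
    have hn2 : (0:ℝ) ≤ (1 - u) ^ (α - 1) := Real.rpow_nonneg hb _
    simp only [Real.norm_eq_abs, abs_of_nonneg hn1, abs_of_nonneg (by positivity : (0:ℝ) ≤ C * (1 - u) ^ (α - 1))]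
    rw [key, mul_comm]
    exact mul_le_mul_of_nonneg_right hfac hn2

lemma betaIntegrand_integrable {a b : ℝ} (ha : 0 < a) (hb : 0 < b) :
    IntervalIntegrable (fun x : ℝ => x ^ (a - 1) * (1 - x) ^ (b - 1)) volume 0 1 := by
  have h1 : IntervalIntegrable (fun x : ℝ => x ^ (a - 1) * (1 - x) ^ (b - 1)) volume 0 (1/2) := by
    refine (intervalIntegrable_rpow' (by linarith) :
      IntervalIntegrable (fun x : ℝ => x ^ (a-1)) volume 0 (1/2)).mul_continuousOn ?_
    intro x hx
    rw [uIcc_of_le (by norm_num : (0:ℝ) ≤ 1/2)] at hx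
    exact (Real.continuousAt_rpow_const _ _ (Or.inl (by intro h; linarith [hx.2]))).comp
      (by fun_prop : ContinuousAt (fun x : ℝ => 1 - x) x) |>.continuousWithinAt
  have h2' : IntervalIntegrable (fun x : ℝ => (1 - x) ^ (b - 1)) volume (1/2) 1 := by
    have := (intervalIntegrable_rpow' (a := 0) (b := 1/2) (by linarith :
      (-1:ℝ) < b - 1)).comp_sub_left 1
    norm_num at this
    exact this.symm
  have h2 : IntervalIntegrable (fun x : ℝ => x ^ (a - 1) * (1 - x) ^ (b - 1)) volume (1/2) 1 := by
    refine h2'.continuousOn_mul ?_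
    intro x hx
    rw [uIcc_of_le (by norm_num : (1/2:ℝ) ≤ 1)] at hx
    exact (Real.continuousAt_rpow_const _ _ (Or.inl (by intro h; linarith [hx.1]))).continuousWithinAt
  exact h1.trans h2

lemma realBeta_integral {a b : ℝ} (ha : 0 < a) (hb : 0 < b) :
    ∫ x in (0:ℝ)..1, x ^ (a - 1) * (1 - x) ^ (b - 1) = realBeta a b := by
  have hC := Complex.Gamma_mul_Gamma_eq_betaIntegral
    (by simpa using ha : 0 < (a:ℂ).re) (by simpa using hb : 0 < (b:ℂ).re)
  have hbi : Complex.betaIntegral (a:ℂ) (b:ℂ) =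
      ((∫ x in (0:ℝ)..1, x ^ (a - 1) * (1 - x) ^ (b - 1) : ℝ) : ℂ) := by
    rw [Complex.betaIntegral, ← intervalIntegral.integral_ofReal]
    refine intervalIntegral.integral_congr fun x hx => ?_
    rw [uIcc_of_le (by norm_num : (0:ℝ) ≤ 1)] at hx
    rw [show ((a:ℂ) - 1) = ((a - 1 : ℝ) : ℂ) by push_cast; ring,
      show ((b:ℂ) - 1) = ((b - 1 : ℝ) : ℂ) by push_cast; ring,
      show (1 - (x:ℂ)) = ((1 - x : ℝ) : ℂ) by push_cast; ring,
      ← Complex.ofReal_cpow hx.1, ← Complex.ofReal_cpow (by linarith [hx.2])]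
    norm_cast
  rw [hbi] at hC
  have hG : ∀ x : ℝ, Complex.Gamma (x:ℂ) = (Real.Gamma x : ℂ) := fun x => Complex.Gamma_ofReal x
  rw [show ((a:ℂ) + b) = ((a + b : ℝ) : ℂ) by push_cast; ring] at hC
  rw [hG, hG, hG] at hC
  have hne : Real.Gamma (a + b) ≠ 0 := (Real.Gamma_pos_of_pos (by linarith)).ne'
  have : Real.Gamma a * Real.Gamma b =
      Real.Gamma (a + b) * ∫ x in (0:ℝ)..1, x ^ (a - 1) * (1 - x) ^ (b - 1) := by
    exact_mod_cast hC
  rw [realBeta, this]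
  field_simp

lemma weight_integral {α : ℝ} (hα : 0 < α) :
    ∫ u in (0:ℝ)..1, (1 - u ^ 2) ^ (α - 1) = realBeta (1/2) α / 2 := by
  set g : ℝ → ℝ := fun x => x ^ ((1:ℝ)/2 - 1) * (1 - x) ^ (α - 1) with hg
  have hsub : (∫ u in (0:ℝ)..1, (2 * u) • g (u ^ 2)) = ∫ x in (0:ℝ)..1, g x := by
    have := integral_comp_smul_deriv''' (a := 0) (b := 1) (f := fun u => u ^ 2)
      (f' := fun u => 2 * u) (g := g) ?_ ?_ ?_ ?_ ?_
    · simpa using this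
    · fun_prop
    · intro x hx
      simpa using ((hasDerivAt_pow 2 x).hasDerivWithinAt : HasDerivWithinAt (fun u : ℝ => u ^ 2)
        ((2:ℕ) * x ^ 1) (Ioi x) x).congr_deriv (by ring)
    · rintro y ⟨u, hu, rfl⟩
      rw [show min 0 1 = (0:ℝ) by norm_num, show max 0 1 = (1:ℝ) by norm_num] at hu
      have h1 : (0:ℝ) < u ^ 2 := pow_pos hu.1 2
      have h2 : u ^ 2 < 1 := by nlinarith [hu.1, hu.2]
      exact ((Real.continuousAt_rpow_const _ _ (Or.inl h1.ne')).mul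
        ((Real.continuousAt_rpow_const _ _ (Or.inl (by intro h; nlinarith))).comp
        (by fun_prop : ContinuousAt (fun x : ℝ => 1 - x) (u^2)))).continuousWithinAt
    · have hss : (fun u : ℝ => u ^ 2) '' (Set.uIcc 0 1) ⊆ Icc (0:ℝ) 1 := by
        rintro y ⟨u, hu, rfl⟩
        simp only [mem_Icc]
        rw [uIcc_of_le (by norm_num : (0:ℝ) ≤ 1)] at hu
        exact ⟨by positivity, by nlinarith [hu.1, hu.2]⟩
      refine IntegrableOn.mono_set ?_ hss
      have := (betaIntegrand_integrable (by norm_num : (0:ℝ) < 1/2) hα)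
      rw [intervalIntegrable_iff, uIoc_of_le (by norm_num : (0:ℝ) ≤ 1)] at this
      exact (integrableOn_Icc_iff_integrableOn_Ioc).mpr this
    · have hi : IntegrableOn (fun u : ℝ => 2 * (1 - u ^ 2) ^ (α - 1)) (Icc 0 1) volume := by
        have := (weight_integrable hα).const_mul 2
        rw [intervalIntegrable_iff, uIoc_of_le (by norm_num : (0:ℝ) ≤ 1)] at this
        exact (integrableOn_Icc_iff_integrableOn_Ioc).mpr this
      rw [show Set.uIcc (0:ℝ) 1 = Icc (0:ℝ) 1 from uIcc_of_le (by norm_num)]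
      refine hi.congr ?_
      have h0 : ∀ᵐ u : ℝ ∂(volume.restrict (Icc (0:ℝ) 1)), u ≠ 0 :=
        ae_restrict_of_ae (by
          rw [MeasureTheory.ae_iff]
          simpa using Real.volume_singleton (x := 0))
      filter_upwards [h0, ae_restrict_mem measurableSet_Icc] with u hu hmem
      have hu0 : 0 < u := lt_of_le_of_ne hmem.1 (Ne.symm hu)
      show 2 * (1 - u ^ 2) ^ (α - 1) = 2 * u * ((u ^ 2) ^ ((1:ℝ)/2 - 1) * (1 - u ^ 2) ^ (α - 1))
      have hpow : ((u:ℝ) ^ 2) ^ ((1:ℝ)/2 - 1) = u⁻¹ := by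
        rw [← Real.rpow_natCast u 2, ← Real.rpow_mul hu0.le,
          show ((2:ℕ):ℝ) * ((1:ℝ)/2 - 1) = -1 by norm_num, Real.rpow_neg_one]
      rw [hpow]
      field_simp
  have hval : ∫ x in (0:ℝ)..1, g x = realBeta (1/2) α := realBeta_integral (by norm_num) hα
  have hcongr : (∫ u in (0:ℝ)..1, (2 * u) • g (u ^ 2))
      = 2 * ∫ u in (0:ℝ)..1, (1 - u ^ 2) ^ (α - 1) := by
    rw [← intervalIntegral.integral_const_mul]
    refine intervalIntegral.integral_congr_ae ?_
    have h0 : ∀ᵐ u : ℝ, u ≠ 0 := by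
      rw [MeasureTheory.ae_iff]; simpa using Real.volume_singleton (x := 0)
    filter_upwards [h0] with u hu humem
    rw [uIoc_of_le (by norm_num : (0:ℝ) ≤ 1)] at humem
    have hu0 : 0 < u := humem.1
    show 2 * u * ((u ^ 2) ^ ((1:ℝ)/2 - 1) * (1 - u ^ 2) ^ (α - 1)) = 2 * (1 - u ^ 2) ^ (α - 1)
    have hpow : ((u:ℝ) ^ 2) ^ ((1:ℝ)/2 - 1) = u⁻¹ := by
      rw [← Real.rpow_natCast u 2, ← Real.rpow_mul hu0.le,
        show ((2:ℕ):ℝ) * ((1:ℝ)/2 - 1) = -1 by norm_num, Real.rpow_neg_one]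
    rw [hpow]
    field_simp
  rw [hcongr, hval] at hsub
  linarith

lemma hasDerivAt_weighted_integral {α : ℝ} (hα : 0 < α) (A A' : ℝ → ℝ → ℝ) (p₀ M : ℝ)
    (hA_cont : ∀ p, Continuous (A p))
    (hA'_cont : Continuous (A' p₀))
    (hbound : ∀ u ∈ Set.Ioc (0:ℝ) 1, ∀ p ∈ ball p₀ 1, |A' p u| ≤ M)
    (hdiff : ∀ u ∈ Set.Ioc (0:ℝ) 1, ∀ p ∈ ball p₀ 1, HasDerivAt (fun q => A q u) (A' p u) p) :
    HasDerivAt (fun p => ∫ u in (0:ℝ)..1, (1 - u ^ 2) ^ (α - 1) * A p u)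
      (∫ u in (0:ℝ)..1, (1 - u ^ 2) ^ (α - 1) * A' p₀ u) p₀ := by
  have hWmeas : Measurable (fun u : ℝ => (1 - u ^ 2) ^ (α - 1)) :=
    (measurable_const.sub (measurable_id.pow_const 2)).pow_const _
  have hIoc : Set.uIoc (0:ℝ) 1 = Set.Ioc 0 1 := uIoc_of_le (by norm_num)
  have key := intervalIntegral.hasDerivAt_integral_of_dominated_loc_of_deriv_le
    (𝕜 := ℝ) (μ := volume) (a := 0) (b := 1) (s := ball p₀ 1)
    (F := fun p u => (1 - u ^ 2) ^ (α - 1) * A p u)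
    (F' := fun p u => (1 - u ^ 2) ^ (α - 1) * A' p u)
    (x₀ := p₀) (bound := fun u => (1 - u ^ 2) ^ (α - 1) * M)
    (ball_mem_nhds p₀ one_pos)
    (Filter.Eventually.of_forall fun p =>
      (hWmeas.mul (hA_cont p).measurable).aestronglyMeasurable)
    ((weight_integrable hα).mul_continuousOn (hA_cont p₀).continuousOn)
    ((hWmeas.mul hA'_cont.measurable).aestronglyMeasurable)
    (Filter.Eventually.of_forall fun u hu p hp => ?_)
    ((weight_integrable hα).mul_const M)
    (Filter.Eventually.of_forall fun u hu p hp =>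
      ((hdiff u (hIoc ▸ hu) p hp).const_mul _))
  · exact key.2
  · rw [hIoc] at hu
    have hw0 : (0:ℝ) ≤ (1 - u ^ 2) ^ (α - 1) := Real.rpow_nonneg (by nlinarith [hu.1, hu.2]) _
    rw [Real.norm_eq_abs, abs_mul, abs_of_nonneg hw0]
    exact mul_le_mul_of_nonneg_left (hbound u hu p hp) hw0

/-- the Erdélyi–Kober average of the D'Alembert solution solves the
Euler–Poisson–Darboux equation, and has initial datum `f`. -/
theorem erdelyiKober_dAlembert_solves_EPD (α c : ℝ) (hα : 0 < α) (hc : 0 < c)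
    (f : ℝ → ℝ) (hf : ContDiff ℝ 2 f)
    (w : ℝ → ℝ → ℝ) (hw : ∀ x t, w x t = (f (x + c * t) + f (x - c * t)) / 2)
    (v : ℝ → ℝ → ℝ)
    (hv : ∀ x t, v x t =
      2 / realBeta α (1 / 2) * ∫ u in (0:ℝ)..1, (1 - u ^ 2) ^ (α - 1) * w x (u * t)) :
    (∀ x t, 0 < t →
      deriv (fun s => deriv (fun r => v x r) s) t + (2 * α / t) * deriv (fun r => v x r) t
        = c ^ 2 * deriv (fun s => deriv (fun r => v r t) s) x) ∧
    (∀ x, v x 0 = f x) := by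
  -- basic differentiability facts
  have hf1 : Differentiable ℝ f := hf.differentiable (by norm_num)
  have hfd : ∀ y, HasDerivAt f (deriv f y) y := fun y => (hf1 y).hasDerivAt
  have hcd : ContDiff ℝ 1 (deriv f) := by
    have h : ContDiff ℝ ((1:ℕ) + 1) f := by exact_mod_cast hf
    exact (contDiff_succ_iff_deriv.mp h).2.2
  have hf2 : Differentiable ℝ (deriv f) := (contDiff_one_iff_deriv.mp hcd).1
  have hfd2 : ∀ y, HasDerivAt (deriv f) (deriv (deriv f) y) y := fun y => (hf2 y).hasDerivAt
  have hfc : Continuous f := hf1.continuous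
  have hcf' : Continuous (deriv f) := hf2.continuous
  have hcf'' : Continuous (deriv (deriv f)) := (contDiff_one_iff_deriv.mp hcd).2
  set K := 2 / realBeta α (1/2) with hK
  set F1 : ℝ → ℝ → ℝ := fun x s => c / 2 * (deriv f (x + c * s) - deriv f (x - c * s)) with hF1
  set F2 : ℝ → ℝ → ℝ :=
    fun x s => c ^ 2 / 2 * (deriv (deriv f) (x + c * s) + deriv (deriv f) (x - c * s)) with hF2
  set G1 : ℝ → ℝ → ℝ := fun x s => (deriv f (x + c * s) + deriv f (x - c * s)) / 2 with hG1
  set G2 : ℝ → ℝ → ℝ :=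
    fun x s => (deriv (deriv f) (x + c * s) + deriv (deriv f) (x - c * s)) / 2 with hG2
  -- continuity of the families
  have hwc : ∀ x, Continuous (fun s => w x s) := by
    intro x; simp only [hw]; fun_prop
  have hF1c : ∀ x, Continuous (fun s => F1 x s) := by
    intro x; simp only [hF1]; fun_prop
  have hF2c : ∀ x, Continuous (fun s => F2 x s) := by
    intro x; simp only [hF2]; fun_prop
  have hG1c : ∀ t, Continuous (fun y => G1 y t) := by
    intro t; simp only [hG1]; fun_prop
  have hG2c : ∀ t, Continuous (fun y => G2 y t) := by
    intro t; simp only [hG2]; fun_prop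
  have hG1c' : ∀ x, Continuous (fun s => G1 x s) := by
    intro x; simp only [hG1]; fun_prop
  have hG2c' : ∀ x, Continuous (fun s => G2 x s) := by
    intro x; simp only [hG2]; fun_prop
  -- pointwise derivative facts
  have hWs : ∀ x u t, HasDerivAt (fun r => w x (u * r)) (u * F1 x (u * t)) t := by
    intro x u t
    simp only [hw, hF1]
    have h1 : HasDerivAt (fun r : ℝ => x + c * (u * r)) (c * (u * 1)) t :=
      (((hasDerivAt_id t).const_mul u).const_mul c).const_add x
    have h2 : HasDerivAt (fun r : ℝ => x - c * (u * r)) (-(c * (u * 1))) t :=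
      (((hasDerivAt_id t).const_mul u).const_mul c).const_sub x
    have := (((hfd _).comp t h1).add ((hfd _).comp t h2)).div_const 2
    exact this.congr_deriv (by ring)
  have hF1s : ∀ x u t, HasDerivAt (fun r => u * F1 x (u * r)) (u * (u * F2 x (u * t))) t := by
    intro x u t
    simp only [hF1, hF2]
    have h1 : HasDerivAt (fun r : ℝ => x + c * (u * r)) (c * (u * 1)) t :=
      (((hasDerivAt_id t).const_mul u).const_mul c).const_add x
    have h2 : HasDerivAt (fun r : ℝ => x - c * (u * r)) (-(c * (u * 1))) t :=
      (((hasDerivAt_id t).const_mul u).const_mul c).const_sub x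
    have := ((((hfd2 _).comp t h1).sub ((hfd2 _).comp t h2)).const_mul (c/2)).const_mul u
    exact this.congr_deriv (by ring)
  have hWx : ∀ t u x, HasDerivAt (fun y => w y (u * t)) (G1 x (u * t)) x := by
    intro t u x
    simp only [hw, hG1]
    have h1 : HasDerivAt (fun y : ℝ => y + c * (u * t)) 1 x := (hasDerivAt_id x).add_const _
    have h2 : HasDerivAt (fun y : ℝ => y - c * (u * t)) 1 x := (hasDerivAt_id x).sub_const _
    have := (((hfd _).comp x h1).add ((hfd _).comp x h2)).div_const 2
    exact this.congr_deriv (by ring)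
  have hG1x : ∀ t u x, HasDerivAt (fun y => G1 y (u * t)) (G2 x (u * t)) x := by
    intro t u x
    simp only [hG1, hG2]
    have h1 : HasDerivAt (fun y : ℝ => y + c * (u * t)) 1 x := (hasDerivAt_id x).add_const _
    have h2 : HasDerivAt (fun y : ℝ => y - c * (u * t)) 1 x := (hasDerivAt_id x).sub_const _
    have := (((hfd2 _).comp x h1).add ((hfd2 _).comp x h2)).div_const 2
    exact this.congr_deriv (by ring)
  -- compact bounds
  have hbdd : ∀ (φ : ℝ → ℝ), Continuous φ → ∀ a b : ℝ,
      ∃ M, 0 ≤ M ∧ ∀ s ∈ Icc a b, |φ s| ≤ M := by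
    intro φ hφ a b
    obtain ⟨C, hC⟩ := (isCompact_Icc (a := a) (b := b)).exists_bound_of_continuousOn
      hφ.continuousOn
    exact ⟨max C 0, le_max_right _ _, fun s hs => by
      rw [← Real.norm_eq_abs]; exact le_trans (hC s hs) (le_max_left _ _)⟩
  -- membership helper for t-direction
  have hmemt : ∀ (t₀ u p : ℝ), u ∈ Set.Ioc (0:ℝ) 1 → p ∈ ball t₀ 1 →
      u * p ∈ Icc (-(|t₀| + 1)) (|t₀| + 1) := by
    intro t₀ u p hu hp
    have h1 : |p - t₀| < 1 := by rwa [mem_ball, Real.dist_eq] at hp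
    have h2 : |u| ≤ 1 := abs_le.mpr ⟨by linarith [hu.1], hu.2⟩
    have h3 : |u * p| ≤ |p| := by
      rw [abs_mul]
      calc |u| * |p| ≤ 1 * |p| := mul_le_mul_of_nonneg_right h2 (abs_nonneg p)
        _ = |p| := one_mul _
    have h4 := abs_le.mp h3
    have h8 : |p| ≤ |t₀| + 1 := by
      have h9 := abs_add_le (p - t₀) t₀
      rw [sub_add_cancel] at h9
      linarith
    exact ⟨by linarith [h4.1], by linarith [h4.2]⟩
  -- membership helper for x-direction
  have hmemx : ∀ (x₀ t u y : ℝ) (s : ℝ), u ∈ Set.Ioc (0:ℝ) 1 → y ∈ ball x₀ 1 →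
      (s = y + c * (u * t) ∨ s = y - c * (u * t)) →
      s ∈ Icc (x₀ - 1 - c * |t|) (x₀ + 1 + c * |t|) := by
    intro x₀ t u y s hu hp hs
    have h1 : |y - x₀| < 1 := by rwa [mem_ball, Real.dist_eq] at hp
    have h2 : |u| ≤ 1 := abs_le.mpr ⟨by linarith [hu.1], hu.2⟩
    have h3 : |c * (u * t)| ≤ c * |t| := by
      rw [abs_mul, abs_mul, abs_of_pos hc]
      have : |u| * |t| ≤ 1 * |t| := mul_le_mul_of_nonneg_right h2 (abs_nonneg t)
      nlinarith [abs_nonneg t]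
    have h4 := abs_le.mp h3
    have h5 := abs_le.mp h1.le
    rcases hs with rfl | rfl
    · exact ⟨by linarith, by linarith⟩
    · exact ⟨by linarith, by linarith⟩
  -- Step A : t-derivative of the integral
  have stepA : ∀ x t₀, HasDerivAt
      (fun r => ∫ u in (0:ℝ)..1, (1 - u ^ 2) ^ (α - 1) * w x (u * r))
      (∫ u in (0:ℝ)..1, (1 - u ^ 2) ^ (α - 1) * (u * F1 x (u * t₀))) t₀ := by
    intro x t₀
    obtain ⟨M, hM0, hM⟩ := hbdd (fun s => F1 x s) (hF1c x) (-(|t₀| + 1)) (|t₀| + 1)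
    exact hasDerivAt_weighted_integral hα (fun r u => w x (u * r))
      (fun r u => u * F1 x (u * r)) t₀ M
      (fun p => show Continuous (fun u : ℝ => w x (u * p)) from
        (hwc x).comp (continuous_id.mul continuous_const))
      (show Continuous (fun u : ℝ => u * F1 x (u * t₀)) from
        continuous_id.mul ((hF1c x).comp (continuous_id.mul continuous_const)))
      (fun u hu p hp => by
        have := hM (u * p) (hmemt t₀ u p hu hp)
        rw [abs_mul]
        have h2 : |u| ≤ 1 := abs_le.mpr ⟨by linarith [hu.1], hu.2⟩
        nlinarith [abs_nonneg (F1 x (u * p)), abs_nonneg u])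
      (fun u _ p _ => hWs x u p)
  -- Step B : second t-derivative
  have stepB : ∀ x t₀, HasDerivAt
      (fun r => ∫ u in (0:ℝ)..1, (1 - u ^ 2) ^ (α - 1) * (u * F1 x (u * r)))
      (∫ u in (0:ℝ)..1, (1 - u ^ 2) ^ (α - 1) * (u * (u * F2 x (u * t₀)))) t₀ := by
    intro x t₀
    obtain ⟨M, hM0, hM⟩ := hbdd (fun s => F2 x s) (hF2c x) (-(|t₀| + 1)) (|t₀| + 1)
    exact hasDerivAt_weighted_integral hα (fun r u => u * F1 x (u * r))
      (fun r u => u * (u * F2 x (u * r))) t₀ M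
      (fun p => show Continuous (fun u : ℝ => u * F1 x (u * p)) from
        continuous_id.mul ((hF1c x).comp (continuous_id.mul continuous_const)))
      (show Continuous (fun u : ℝ => u * (u * F2 x (u * t₀))) from
        continuous_id.mul (continuous_id.mul
          ((hF2c x).comp (continuous_id.mul continuous_const))))
      (fun u hu p hp => by
        have := hM (u * p) (hmemt t₀ u p hu hp)
        rw [abs_mul, abs_mul]
        have h2 : |u| ≤ 1 := abs_le.mpr ⟨by linarith [hu.1], hu.2⟩
        nlinarith [abs_nonneg (F2 x (u * p)), abs_nonneg u,
          mul_nonneg (sub_nonneg.mpr h2) (abs_nonneg (F2 x (u * p))),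
          mul_nonneg (mul_nonneg (abs_nonneg u) (sub_nonneg.mpr h2))
            (abs_nonneg (F2 x (u * p)))])
      (fun u _ p _ => hF1s x u p)
  -- Step C : x-derivative
  have stepC : ∀ t x₀, HasDerivAt
      (fun y => ∫ u in (0:ℝ)..1, (1 - u ^ 2) ^ (α - 1) * w y (u * t))
      (∫ u in (0:ℝ)..1, (1 - u ^ 2) ^ (α - 1) * G1 x₀ (u * t)) x₀ := by
    intro t x₀
    obtain ⟨M, hM0, hM⟩ := hbdd (deriv f) hcf' (x₀ - 1 - c * |t|) (x₀ + 1 + c * |t|)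
    refine hasDerivAt_weighted_integral hα (fun y u => w y (u * t))
      (fun y u => G1 y (u * t)) x₀ M
      (fun y => show Continuous (fun u : ℝ => w y (u * t)) from
        (hwc y).comp (continuous_id.mul continuous_const))
      (show Continuous (fun u : ℝ => G1 x₀ (u * t)) from
        (hG1c' x₀).comp (continuous_id.mul continuous_const))
      (fun u hu y hy => ?_)
      (fun u hu y hy => hWx t u y)
    have hA := hM (y + c * (u * t)) (hmemx x₀ t u y _ hu hy (Or.inl rfl))
    have hB := hM (y - c * (u * t)) (hmemx x₀ t u y _ hu hy (Or.inr rfl))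
    simp only [hG1]
    rw [abs_div, abs_two]
    have h9 := abs_add_le (deriv f (y + c * (u * t))) (deriv f (y - c * (u * t)))
    linarith
  -- Step D : second x-derivative
  have stepD : ∀ t x₀, HasDerivAt
      (fun y => ∫ u in (0:ℝ)..1, (1 - u ^ 2) ^ (α - 1) * G1 y (u * t))
      (∫ u in (0:ℝ)..1, (1 - u ^ 2) ^ (α - 1) * G2 x₀ (u * t)) x₀ := by
    intro t x₀
    obtain ⟨M, hM0, hM⟩ := hbdd (deriv (deriv f)) hcf'' (x₀ - 1 - c * |t|) (x₀ + 1 + c * |t|)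
    refine hasDerivAt_weighted_integral hα (fun y u => G1 y (u * t))
      (fun y u => G2 y (u * t)) x₀ M
      (fun y => show Continuous (fun u : ℝ => G1 y (u * t)) from
        (hG1c' y).comp (continuous_id.mul continuous_const))
      (show Continuous (fun u : ℝ => G2 x₀ (u * t)) from
        (hG2c' x₀).comp (continuous_id.mul continuous_const))
      (fun u hu y hy => ?_)
      (fun u hu y hy => hG1x t u y)
    have hA := hM (y + c * (u * t)) (hmemx x₀ t u y _ hu hy (Or.inl rfl))
    have hB := hM (y - c * (u * t)) (hmemx x₀ t u y _ hu hy (Or.inr rfl))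
    simp only [hG2]
    rw [abs_div, abs_two]
    have h9 := abs_add_le (deriv (deriv f) (y + c * (u * t))) (deriv (deriv f) (y - c * (u * t)))
    linarith
  constructor
  · -- the EPD equation
    intro x t ht
    have e1 : (fun r => v x r)
        = fun r => K * ∫ u in (0:ℝ)..1, (1 - u ^ 2) ^ (α - 1) * w x (u * r) :=
      funext fun r => hv x r
    have d1 : ∀ s, deriv (fun r => v x r) s
        = K * ∫ u in (0:ℝ)..1, (1 - u ^ 2) ^ (α - 1) * (u * F1 x (u * s)) := fun s => by
      rw [e1]; exact ((stepA x s).const_mul K).deriv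
    have e2 : (fun s => deriv (fun r => v x r) s)
        = fun s => K * ∫ u in (0:ℝ)..1, (1 - u ^ 2) ^ (α - 1) * (u * F1 x (u * s)) := funext d1
    have d2 : deriv (fun s => deriv (fun r => v x r) s) t
        = K * ∫ u in (0:ℝ)..1, (1 - u ^ 2) ^ (α - 1) * (u * (u * F2 x (u * t))) := by
      rw [e2]; exact ((stepB x t).const_mul K).deriv
    have e3 : (fun y => v y t)
        = fun y => K * ∫ u in (0:ℝ)..1, (1 - u ^ 2) ^ (α - 1) * w y (u * t) :=
      funext fun y => hv y t
    have d3 : ∀ y, deriv (fun r => v r t) y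
        = K * ∫ u in (0:ℝ)..1, (1 - u ^ 2) ^ (α - 1) * G1 y (u * t) := fun y => by
      rw [e3]; exact ((stepC t y).const_mul K).deriv
    have e4 : (fun s => deriv (fun r => v r t) s)
        = fun y => K * ∫ u in (0:ℝ)..1, (1 - u ^ 2) ^ (α - 1) * G1 y (u * t) := funext d3
    have d4 : deriv (fun s => deriv (fun r => v r t) s) x
        = K * ∫ u in (0:ℝ)..1, (1 - u ^ 2) ^ (α - 1) * G2 x (u * t) := by
      rw [e4]; exact ((stepD t x).const_mul K).deriv
    rw [d2, d4, d1]
    set S1 := ∫ u in (0:ℝ)..1, (1 - u ^ 2) ^ (α - 1) * (u * (u * F2 x (u * t))) with hS1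
    set S2 := ∫ u in (0:ℝ)..1, (1 - u ^ 2) ^ (α - 1) * (u * F1 x (u * t)) with hS2
    set S4 := ∫ u in (0:ℝ)..1, (1 - u ^ 2) ^ (α - 1) * F2 x (u * t) with hS4
    set S3 := ∫ u in (0:ℝ)..1, (1 - u ^ 2) ^ α * F2 x (u * t) with hS3
    have hcont1 : Continuous (fun u : ℝ => F1 x (u * t)) :=
      (hF1c x).comp (continuous_id.mul continuous_const)
    have hcont2 : Continuous (fun u : ℝ => F2 x (u * t)) :=
      (hF2c x).comp (continuous_id.mul continuous_const)
    have hWα : Continuous (fun u : ℝ => (1 - u ^ 2) ^ α) :=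
      continuous_iff_continuousAt.mpr fun u =>
        (Real.continuousAt_rpow_const _ _ (Or.inr hα.le)).comp (by fun_prop)
    -- relate the RHS to S4
    have hRHS : c ^ 2 * (K * ∫ u in (0:ℝ)..1, (1 - u ^ 2) ^ (α - 1) * G2 x (u * t))
        = K * S4 := by
      have h : S4 = c ^ 2 * ∫ u in (0:ℝ)..1, (1 - u ^ 2) ^ (α - 1) * G2 x (u * t) := by
        rw [hS4, ← intervalIntegral.integral_const_mul]
        refine intervalIntegral.integral_congr fun u _ => ?_
        simp only [hF2, hG2]; ring
      rw [h]; ring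
    rw [hRHS]
    -- integration by parts
    set H : ℝ → ℝ := fun u => (1 - u ^ 2) ^ α * F1 x (u * t) with hH
    set H' : ℝ → ℝ := fun u => (1 - u ^ 2) ^ (α - 1) * (α * (-(2 * u)) * F1 x (u * t))
        + (1 - u ^ 2) ^ α * (t * F2 x (u * t)) with hH'
    have hc1 : Continuous (fun u : ℝ => α * (-(2 * u)) * F1 x (u * t)) :=
      (continuous_const.mul ((continuous_const.mul continuous_id).neg)).mul hcont1
    have hint1 : IntervalIntegrable
        (fun u : ℝ => (1 - u ^ 2) ^ (α - 1) * (α * (-(2 * u)) * F1 x (u * t))) volume 0 1 :=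
      (weight_integrable hα).mul_continuousOn hc1.continuousOn
    have hint2 : IntervalIntegrable
        (fun u : ℝ => (1 - u ^ 2) ^ α * (t * F2 x (u * t))) volume 0 1 :=
      (hWα.mul (continuous_const.mul hcont2)).intervalIntegrable _ _
    have hHc : Continuous H := by rw [hH]; exact hWα.mul hcont1
    have hHd : ∀ u ∈ Ioo (0:ℝ) 1, HasDerivAt H (H' u) u := by
      intro u hu
      have hbase : (0:ℝ) < 1 - u ^ 2 := by nlinarith [hu.1, hu.2]
      have h1 : HasDerivAt (fun y : ℝ => 1 - y ^ 2) (-(2 * u)) u := by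
        have h1' : HasDerivAt (fun y : ℝ => 1 - y ^ 2) (-(((2:ℕ):ℝ) * u ^ (2 - 1))) u :=
          (hasDerivAt_pow 2 u).const_sub 1
        convert h1' using 1
        push_cast; ring
      have h2 : HasDerivAt (fun y : ℝ => (1 - y ^ 2) ^ α)
          ((1 - u ^ 2) ^ (α - 1) * (α * (-(2 * u)))) u := by
        have h3 := (Real.hasDerivAt_rpow_const (x := 1 - u ^ 2) (p := α)
          (Or.inl hbase.ne')).comp u h1
        exact h3.congr_deriv (by ring)
      have h4 : HasDerivAt (fun y : ℝ => F1 x (y * t)) (t * F2 x (u * t)) u := by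
        simp only [hF1, hF2]
        have hi1 : HasDerivAt (fun y : ℝ => x + c * (y * t)) (c * (1 * t)) u :=
          (((hasDerivAt_id u).mul_const t).const_mul c).const_add x
        have hi2 : HasDerivAt (fun y : ℝ => x - c * (y * t)) (-(c * (1 * t))) u :=
          (((hasDerivAt_id u).mul_const t).const_mul c).const_sub x
        exact ((((hfd2 _).comp u hi1).sub
          ((hfd2 _).comp u hi2)).const_mul (c / 2)).congr_deriv (by ring)
      have h5 := h2.mul h4
      simp only [hH, hH']
      exact h5.congr_deriv (by ring)
    have hint' : IntervalIntegrable H' volume 0 1 := by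
      rw [hH']; exact hint1.add hint2
    have hftc : (∫ u in (0:ℝ)..1, H' u) = H 1 - H 0 :=
      intervalIntegral.integral_eq_sub_of_hasDerivAt_of_le (by norm_num)
        hHc.continuousOn hHd hint'
    have hH1 : H 1 = 0 := by norm_num [hH, Real.zero_rpow hα.ne']
    have hH0 : H 0 = 0 := by norm_num [hH, hF1]
    have hsplit : (∫ u in (0:ℝ)..1, H' u)
        = (∫ u in (0:ℝ)..1, (1 - u ^ 2) ^ (α - 1) * (α * (-(2 * u)) * F1 x (u * t)))
          + ∫ u in (0:ℝ)..1, (1 - u ^ 2) ^ α * (t * F2 x (u * t)) := by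
      simp only [hH']
      exact intervalIntegral.integral_add hint1 hint2
    have hpull1 : (∫ u in (0:ℝ)..1, (1 - u ^ 2) ^ (α - 1) * (α * (-(2 * u)) * F1 x (u * t)))
        = -(2 * α) * S2 := by
      rw [hS2, ← intervalIntegral.integral_const_mul]
      exact intervalIntegral.integral_congr fun u _ => by ring
    have hpull2 : (∫ u in (0:ℝ)..1, (1 - u ^ 2) ^ α * (t * F2 x (u * t))) = t * S3 := by
      rw [hS3, ← intervalIntegral.integral_const_mul]
      exact intervalIntegral.integral_congr fun u _ => by ring
    have hibp : t * S3 = 2 * α * S2 := by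
      rw [hsplit, hpull1, hpull2, hH1, hH0] at hftc
      linarith
    -- the splitting identity S4 - S1 = S3
    have hint4 : IntervalIntegrable (fun u : ℝ => (1 - u ^ 2) ^ (α - 1) * F2 x (u * t))
        volume 0 1 := (weight_integrable hα).mul_continuousOn hcont2.continuousOn
    have hint5 : IntervalIntegrable
        (fun u : ℝ => (1 - u ^ 2) ^ (α - 1) * (u * (u * F2 x (u * t)))) volume 0 1 :=
      (weight_integrable hα).mul_continuousOn
        (continuous_id.mul (continuous_id.mul hcont2)).continuousOn
    have hsub : S4 - S1 = S3 := by
      rw [hS4, hS1, hS3, ← intervalIntegral.integral_sub hint4 hint5]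
      refine intervalIntegral.integral_congr fun u hu => ?_
      rw [uIcc_of_le (by norm_num : (0:ℝ) ≤ 1)] at hu
      have hb : (0:ℝ) ≤ 1 - u ^ 2 := by nlinarith [hu.1, hu.2]
      have key : (1 - u ^ 2) ^ (α - 1) * F2 x (u * t)
          - (1 - u ^ 2) ^ (α - 1) * (u * (u * F2 x (u * t)))
          = (1 - u ^ 2) ^ (α - 1) * (1 - u ^ 2) * F2 x (u * t) := by ring
      rw [key]
      rcases eq_or_lt_of_le hb with h0 | h0
      · rw [← h0]
        simp [Real.zero_rpow hα.ne']
      · rw [show (1 - u ^ 2) ^ (α - 1) * (1 - u ^ 2) = (1 - u ^ 2) ^ α from by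
          rw [← Real.rpow_add_one h0.ne' (α - 1), sub_add_cancel]]
    have h5 : 2 * α / t * S2 = S4 - S1 := by
      rw [hsub]
      field_simp
      linarith [hibp]
    linear_combination K * h5
  · -- initial condition
    intro x
    rw [hv x 0]
    have e : (fun u : ℝ => (1 - u ^ 2) ^ (α - 1) * w x (u * 0))
        = fun u => (1 - u ^ 2) ^ (α - 1) * f x := by
      funext u
      rw [hw]
      simp only [mul_zero, add_zero, sub_zero]
      ring
    rw [e, intervalIntegral.integral_mul_const, weight_integral hα]
    have hBpos : 0 < realBeta α (1 / 2) := by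
      have h1 := Real.Gamma_pos_of_pos hα
      have h2 := Real.Gamma_pos_of_pos (by norm_num : (0:ℝ) < 1 / 2)
      have h3 := Real.Gamma_pos_of_pos (by linarith : (0:ℝ) < α + 1 / 2)
      exact div_pos (mul_pos h1 h2) h3
    have hsym : realBeta (1 / 2) α = realBeta α (1 / 2) := by
      simp only [realBeta]
      rw [mul_comm, add_comm]
    rw [hsym, hK]
    field_simp
end

section
/- For γ > 0, c > 0, d ≥ 1, the function p(x,t) = Γ(γ + d/2)/(π^{d/2}Γ(γ)) · (ct)^{-(d-2+2γ)} · (c²t² - ‖x‖²)^{γ-1} satisfies the d-dimensional Euler–Poisson–Darboux equation ∂²p/∂t² + ((d + 2γ - 1)/t)·∂p/∂t = c²·Δp at every point (x,t) with t > 0 and ‖x‖ < ct. -/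
open Real

lemma hasDerivAt_T (c q A α β r : ℝ) (hcr : c * r ≠ 0) (hu : c^2*r^2 - q ≠ 0) :
    HasDerivAt (fun r => A * (c*r)^α * (c^2*r^2 - q)^β)
      (A*α*c * (c*r)^(α-1) * (c^2*r^2-q)^β
        + (2*A*β*c) * (c*r)^(α+1) * (c^2*r^2-q)^(β-1)) r := by
  have h1 : HasDerivAt (fun r : ℝ => (c*r)^α) (α * (c*r)^(α-1) * c) r :=
    (Real.hasDerivAt_rpow_const (Or.inl hcr)).comp r
      (by simpa using (hasDerivAt_id r).const_mul c)
  have h2 : HasDerivAt (fun r : ℝ => (c^2*r^2 - q)^β)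
      (β * (c^2*r^2-q)^(β-1) * (c^2*(2*r))) r := by
    have hin : HasDerivAt (fun r : ℝ => c^2*r^2 - q) (c^2*(2*r)) r := by
      simpa using ((hasDerivAt_pow 2 r).const_mul (c^2)).sub_const q
    exact (Real.hasDerivAt_rpow_const (Or.inl hu)).comp r hin
  have h := (h1.const_mul A).mul h2
  refine h.congr_deriv ?_
  rw [Real.rpow_add_one hcr]
  ring

lemma hasDerivAt_S (A B β : ℝ) (k : ℕ) (s : ℝ) (hB : B - s^2 ≠ 0) :
    HasDerivAt (fun s : ℝ => A * s^k * (B - s^2)^β)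
      (A*k*s^(k-1)*(B-s^2)^β + (-2*A*β)*s^(k+1)*(B-s^2)^(β-1)) s := by
  have h1 : HasDerivAt (fun s : ℝ => s^k) ((k:ℝ) * s^(k-1)) s := hasDerivAt_pow k s
  have h2 : HasDerivAt (fun s : ℝ => (B - s^2)^β) (β*(B-s^2)^(β-1)*(-(2*s))) s := by
    have hin : HasDerivAt (fun s : ℝ => B - s^2) (-(2*s)) s := by
      simpa using (hasDerivAt_pow 2 s).const_sub B
    exact (Real.hasDerivAt_rpow_const (Or.inl hB)).comp s hin
  have h := (h1.const_mul A).mul h2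
  refine h.congr_deriv ?_
  rw [pow_succ]
  ring

/-- the `d`-dimensional EPD fundamental density satisfies
`∂²p/∂t² + ((d+2γ-1)/t) ∂p/∂t = c² Δp` inside the light cone. -/
theorem epd_density_solves_EPD_dim_d (d : ℕ) (hd : 1 ≤ d) (γ c : ℝ)
    (hγ : 0 < γ) (hc : 0 < c)
    (p : EuclideanSpace ℝ (Fin d) → ℝ → ℝ)
    (hp : ∀ x t, p x t =
      Real.Gamma (γ + d / 2) / (Real.pi ^ ((d : ℝ) / 2) * Real.Gamma γ)
        * (c * t) ^ (-((d : ℝ) - 2 + 2 * γ)) * (c ^ 2 * t ^ 2 - ‖x‖ ^ 2) ^ (γ - 1))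
    (x : EuclideanSpace ℝ (Fin d)) (t : ℝ) (ht : 0 < t) (hx : ‖x‖ < c * t) :
    deriv (fun r => deriv (fun r' => p x r') r) t
      + ((d + 2 * γ - 1) / t) * deriv (fun r => p x r) t
      = c ^ 2 * ∑ j : Fin d,
          deriv (fun s => deriv (fun s' => p (WithLp.toLp 2 (Function.update x j s')) t) s) (x j) := by
  set K := Real.Gamma (γ + d / 2) / (Real.pi ^ ((d : ℝ) / 2) * Real.Gamma γ) with hK
  set m := (d : ℝ) - 2 + 2 * γ with hm
  set q := ‖x‖ ^ 2 with hq
  have hct : 0 < c * t := mul_pos hc ht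
  have hu : 0 < c ^ 2 * t ^ 2 - q := by
    have h1 : ‖x‖ ^ 2 < (c * t) ^ 2 := by
      have := norm_nonneg x
      nlinarith
    rw [hq]; nlinarith
  -- pointwise norm formulas
  have hnorm : ∀ y : EuclideanSpace ℝ (Fin d), ‖y‖ ^ 2 = ∑ i, (y i) ^ 2 := by
    intro y
    rw [EuclideanSpace.norm_eq, Real.sq_sqrt (by positivity)]
    simp [sq_abs]
  have hupd : ∀ (j : Fin d) (s : ℝ),
      ∑ i, ((WithLp.toLp 2 (Function.update x j s) : EuclideanSpace ℝ (Fin d)) i) ^ 2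
        = q - (x j) ^ 2 + s ^ 2 := by
    intro j s
    rw [hq, hnorm]
    have h1 : ∀ i, ((WithLp.toLp 2 (Function.update x j s) : EuclideanSpace ℝ (Fin d)) i) ^ 2
        = Function.update (fun i => (x i) ^ 2) j (s ^ 2) i := by
      intro i
      exact (Function.apply_update (fun _ v => v ^ 2) x j s i)
    simp_rw [h1]
    rw [Finset.sum_update_of_mem (Finset.mem_univ j),
      Finset.sum_sdiff_eq_sub (Finset.singleton_subset_iff.mpr (Finset.mem_univ j))]
    simp
    ring
  -- time derivative (first)
  have hD1 : ∀ r : ℝ, c * r ≠ 0 → c ^ 2 * r ^ 2 - q ≠ 0 →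
      deriv (fun r' => p x r') r =
        K*(-m)*c * (c*r)^(-m-1) * (c^2*r^2-q)^(γ-1)
          + (2*K*(γ-1)*c) * (c*r)^(-m+1) * (c^2*r^2-q)^(γ-1-1) := by
    intro r h1 h2
    have hfun : (fun r' => p x r') = fun r' => K * (c*r')^(-m) * (c^2*r'^2 - q)^(γ-1) := by
      funext r'
      rw [hp, hq]
    rw [hfun]
    exact (hasDerivAt_T c q K (-m) (γ-1) r h1 h2).deriv
  -- neighborhood facts at t
  have hev : ∀ᶠ r in nhds t, c * r ≠ 0 ∧ c ^ 2 * r ^ 2 - q ≠ 0 := by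
    have hc1 : ContinuousAt (fun r : ℝ => c * r) t := by fun_prop
    have hc2 : ContinuousAt (fun r : ℝ => c ^ 2 * r ^ 2 - q) t := by fun_prop
    exact (hc1.eventually_ne hct.ne').and (hc2.eventually_ne hu.ne')
  -- second time derivative
  have h2nd : deriv (fun r => deriv (fun r' => p x r') r) t =
      ((K*(-m)*c)*(-m-1)*c * (c*t)^(-m-1-1) * (c^2*t^2-q)^(γ-1)
        + (2*(K*(-m)*c)*(γ-1)*c) * (c*t)^(-m-1+1) * (c^2*t^2-q)^(γ-1-1))
      + ((2*K*(γ-1)*c)*(-m+1)*c * (c*t)^(-m+1-1) * (c^2*t^2-q)^(γ-1-1)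
        + (2*(2*K*(γ-1)*c)*(γ-1-1)*c) * (c*t)^(-m+1+1) * (c^2*t^2-q)^(γ-1-1-1)) := by
    have heq : (fun r => deriv (fun r' => p x r') r) =ᶠ[nhds t]
        (fun r => K*(-m)*c * (c*r)^(-m-1) * (c^2*r^2-q)^(γ-1)
          + (2*K*(γ-1)*c) * (c*r)^(-m+1) * (c^2*r^2-q)^(γ-1-1)) :=
      hev.mono fun r hr => hD1 r hr.1 hr.2
    rw [heq.deriv_eq]
    exact ((hasDerivAt_T c q (K*(-m)*c) (-m-1) (γ-1) t hct.ne' hu.ne').add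
      (hasDerivAt_T c q (2*K*(γ-1)*c) (-m+1) (γ-1-1) t hct.ne' hu.ne')).deriv
  -- spatial second derivatives
  have hjj : ∀ j : Fin d,
      deriv (fun s => deriv (fun s' => p (WithLp.toLp 2 (Function.update x j s')) t) s) (x j) =
        (-2*(K * (c*t)^(-m))*(γ-1)) * (c^2*t^2-q)^(γ-1-1)
          + (-2*(-2*(K * (c*t)^(-m))*(γ-1))*(γ-1-1)) * (x j)^2 * (c^2*t^2-q)^(γ-1-1-1) := by
    intro j
    set A := K * (c*t)^(-m) with hA
    set B := c^2*t^2 - q + (x j)^2 with hB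
    have hBx : B - (x j)^2 = c^2*t^2 - q := by rw [hB]; ring
    have hfun : (fun s' => p (WithLp.toLp 2 (Function.update x j s')) t)
        = fun s' => A * s'^(0:ℕ) * (B - s'^2)^(γ-1) := by
      funext s
      rw [hp]
      rw [hnorm (WithLp.toLp 2 (Function.update x j s)), hupd j s]
      rw [show c ^ 2 * t ^ 2 - (q - (x j)^2 + s^2) = B - s^2 by rw [hB]; ring,
        pow_zero, mul_one, hA]
    have hDin : ∀ s : ℝ, B - s^2 ≠ 0 →
        deriv (fun s' => p (WithLp.toLp 2 (Function.update x j s')) t) s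
          = (-2*A*(γ-1)) * s^(1:ℕ) * (B-s^2)^(γ-1-1) := by
      intro s hs
      rw [hfun, (hasDerivAt_S A B (γ-1) 0 s hs).deriv]
      norm_num
    have hevs : ∀ᶠ s in nhds (x j), B - s^2 ≠ 0 := by
      have hc1 : ContinuousAt (fun s : ℝ => B - s^2) (x j) := by fun_prop
      have h0 : B - (x j)^2 ≠ 0 := by rw [hBx]; exact hu.ne'
      exact hc1.eventually_ne h0
    have heq : (fun s => deriv (fun s' => p (WithLp.toLp 2 (Function.update x j s')) t) s) =ᶠ[nhds (x j)]
        (fun s => (-2*A*(γ-1)) * s^(1:ℕ) * (B-s^2)^(γ-1-1)) :=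
      hevs.mono fun s hs => hDin s hs
    rw [heq.deriv_eq,
      (hasDerivAt_S (-2*A*(γ-1)) B (γ-1-1) 1 (x j) (by rw [hBx]; exact hu.ne')).deriv]
    rw [hBx]
    norm_num
  -- sum over coordinates
  have hsum : ∑ j : Fin d,
      deriv (fun s => deriv (fun s' => p (WithLp.toLp 2 (Function.update x j s')) t) s) (x j)
      = (d:ℝ) * ((-2*(K * (c*t)^(-m))*(γ-1)) * (c^2*t^2-q)^(γ-1-1))
        + (-2*(-2*(K * (c*t)^(-m))*(γ-1))*(γ-1-1)) * (c^2*t^2-q)^(γ-1-1-1) * q := by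
    rw [Finset.sum_congr rfl (fun j _ => hjj j), Finset.sum_add_distrib,
      Finset.sum_const, Finset.card_univ, Fintype.card_fin]
    have hs2 : ∑ j : Fin d,
        (-2*(-2*(K * (c*t)^(-m))*(γ-1))*(γ-1-1)) * (x j)^2 * (c^2*t^2-q)^(γ-1-1-1)
        = (-2*(-2*(K * (c*t)^(-m))*(γ-1))*(γ-1-1)) * (c^2*t^2-q)^(γ-1-1-1) * q := by
      rw [hq, hnorm, Finset.mul_sum]
      apply Finset.sum_congr rfl
      intro j _
      ring
    rw [hs2]
    simp [nsmul_eq_mul]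
  -- assemble
  rw [h2nd, hD1 t hct.ne' hu.ne', hsum]
  -- normalize rpow exponents
  have key : ∀ a : ℝ, (c*t)^(a+1) = (c*t)^a*(c*t) := fun a => Real.rpow_add_one hct.ne' a
  have keyu : ∀ a : ℝ, (c^2*t^2-q)^(a+1) = (c^2*t^2-q)^a*(c^2*t^2-q) :=
    fun a => Real.rpow_add_one hu.ne' a
  have e1 : (c*t)^(-m-1) = (c*t)^(-m-1-1)*(c*t) := by
    have h := key (-m-1-1)
    rw [show (-m-1-1)+(1:ℝ) = -m-1 by ring] at h
    exact h
  have e2 : (c*t)^(-m-1+1) = (c*t)^(-m-1-1)*(c*t)*(c*t) := by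
    rw [key (-m-1), e1]
  have e5 : (c*t)^(-m) = (c*t)^(-m-1-1)*(c*t)*(c*t) := by
    have h := key (-m-1)
    rw [show (-m-1)+(1:ℝ) = -m by ring] at h
    rw [h, e1]
  have e3 : (c*t)^(-m+1-1) = (c*t)^(-m-1-1)*(c*t)*(c*t) := by
    have h := key (-m-1)
    rw [show (-m-1)+(1:ℝ) = -m+1-1 by ring] at h
    rw [h, e1]
  have e6 : (c*t)^(-m+1) = (c*t)^(-m-1-1)*(c*t)*(c*t)*(c*t) := by
    rw [key (-m), e5]
  have e4 : (c*t)^(-m+1+1) = (c*t)^(-m-1-1)*(c*t)*(c*t)*(c*t)*(c*t) := by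
    rw [key (-m+1), e6]
  have f2 : (c^2*t^2-q)^(γ-1-1) = (c^2*t^2-q)^(γ-1-1-1)*(c^2*t^2-q) := by
    have h := keyu (γ-1-1-1)
    rw [show (γ-1-1-1)+(1:ℝ) = γ-1-1 by ring] at h
    exact h
  have f1 : (c^2*t^2-q)^(γ-1) = (c^2*t^2-q)^(γ-1-1-1)*(c^2*t^2-q)*(c^2*t^2-q) := by
    have h := keyu (γ-1-1)
    rw [show (γ-1-1)+(1:ℝ) = γ-1 by ring] at h
    rw [h, f2]
  rw [f1, f2, e1, e2, e3, e4, e5, e6, hm]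
  field_simp
  ring
end

section
/- Let p(x,t) = Γ(γ + d/2)/(π^{d/2}Γ(γ)) · (ct)^{-(d-2+2γ)} · (c²t² - ‖x‖²)^{γ-1} on the ball of radius ct in ℝ^d. Then for 1 ≤ m < d, the marginal density obtained by integrating out the last d - m coordinates equals Γ(γ + d/2)/(Γ(γ + (d-m)/2)·π^{m/2}) · (c²t² - ‖x_m‖²)^{γ - 1 + (d-m)/2} / (ct)^{2γ + d - 2}, for ‖x_m‖ < ct. -/
open Real MeasureTheory intervalIntegral

lemma real_beta {p q : ℝ} (hp : 0 < p) (hq : 0 < q) :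
    ∫ u in (0:ℝ)..1, u ^ (p - 1) * (1 - u) ^ (q - 1)
      = Real.Gamma p * Real.Gamma q / Real.Gamma (p + q) := by
  have h := Complex.Gamma_mul_Gamma_eq_betaIntegral (s := (p:ℂ)) (t := (q:ℂ))
      (by simpa using hp) (by simpa using hq)
  have hcoe : Complex.betaIntegral p q
      = ((∫ u in (0:ℝ)..1, u ^ (p-1) * (1-u) ^ (q-1) : ℝ) : ℂ) := by
    rw [Complex.betaIntegral, ← intervalIntegral.integral_ofReal]
    refine intervalIntegral.integral_congr fun u hu => ?_
    rw [Set.uIcc_of_le zero_le_one] at hu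
    push_cast
    rw [Complex.ofReal_cpow hu.1, Complex.ofReal_cpow (by linarith [hu.2] : (0:ℝ) ≤ 1 - u)]
    push_cast
    ring
  rw [hcoe, ← Complex.ofReal_add, Complex.Gamma_ofReal, Complex.Gamma_ofReal,
    Complex.Gamma_ofReal, ← Complex.ofReal_mul, ← Complex.ofReal_mul] at h
  have := Complex.ofReal_injective h
  have hΓ : Real.Gamma (p + q) ≠ 0 := (Real.Gamma_pos_of_pos (by linarith)).ne'
  field_simp
  linarith [this]

lemma real_beta_scaled {p q a : ℝ} (hp : 0 < p) (hq : 0 < q) (ha : 0 < a) :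
    ∫ u in (0:ℝ)..a, u ^ (p - 1) * (a - u) ^ (q - 1)
      = a ^ (p + q - 1) * (Real.Gamma p * Real.Gamma q / Real.Gamma (p + q)) := by
  have h := intervalIntegral.integral_comp_mul_right
    (f := fun u => u ^ (p - 1) * (a - u) ^ (q - 1)) (a := 0) (b := 1) ha.ne'
  rw [zero_mul, one_mul] at h
  have h2 : ∫ x in (0:ℝ)..1, (x * a) ^ (p-1) * (a - x * a) ^ (q-1)
      = a ^ (p + q - 2) * ∫ x in (0:ℝ)..1, x ^ (p-1) * (1-x) ^ (q-1) := by
    rw [← intervalIntegral.integral_const_mul]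
    refine intervalIntegral.integral_congr fun x hx => ?_
    rw [Set.uIcc_of_le zero_le_one] at hx
    have h1x : (0:ℝ) ≤ 1 - x := by linarith [hx.2]
    have : a - x * a = (1 - x) * a := by ring
    rw [this, Real.mul_rpow hx.1 ha.le, Real.mul_rpow h1x ha.le]
    rw [show p + q - 2 = (p-1) + (q-1) by ring, Real.rpow_add ha]
    ring
  rw [h2, real_beta hp hq, smul_eq_mul] at h
  have := h.symm
  rw [inv_mul_eq_iff_eq_mul₀ ha.ne'] at this
  rw [this, ← mul_assoc, mul_comm a, ← Real.rpow_add_one ha.ne' (p+q-2),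
    show p + q - 2 + 1 = p + q - 1 by ring]

lemma beta_integrable {p q a : ℝ} (hp : 0 < p) (hq : 0 < q) (ha : 0 < a) :
    IntervalIntegrable (fun u => u ^ (p - 1) * (a - u) ^ (q - 1)) volume 0 a := by
  have h1 : IntervalIntegrable (fun u => u ^ (p-1) * (a-u)^(q-1)) volume 0 (a/2) := by
    apply (intervalIntegrable_rpow' (by linarith)).mul_continuousOn
    apply ContinuousOn.rpow_const (by fun_prop)
    intro x hx
    rw [Set.uIcc_of_le (by linarith)] at hx
    left; intro hc; nlinarith [hx.2]
  have h2 : IntervalIntegrable (fun u => u ^ (p-1) * (a-u)^(q-1)) volume (a/2) a := by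
    have hbase : IntervalIntegrable (fun u => (a-u)^(q-1)) volume (a/2) a := by
      have := (intervalIntegrable_rpow' (r := q-1) (by linarith) (a := a/2) (b := 0)).comp_sub_left a
      have e : a - a / 2 = a / 2 := by ring
      rwa [sub_zero, e] at this
    apply hbase.continuousOn_mul
    apply ContinuousOn.rpow_const (by fun_prop)
    intro x hx
    rw [Set.uIcc_of_le (by linarith)] at hx
    left; intro hc; nlinarith [hx.1]
  exact h1.trans h2

lemma radial_integrable {k : ℕ} (hk : 1 ≤ k) {γ R : ℝ} (hγ : 0 < γ) (hR : 0 < R) :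
    IntervalIntegrable (fun r => r ^ (k-1) * (R^2 - r^2) ^ (γ-1)) volume 0 R := by
  have h1 : IntervalIntegrable (fun r => r ^ (k-1) * (R^2 - r^2) ^ (γ-1)) volume 0 (R/2) := by
    apply ContinuousOn.intervalIntegrable
    apply ContinuousOn.mul (by fun_prop)
    apply ContinuousOn.rpow_const (by fun_prop)
    intro r hr
    rw [Set.uIcc_of_le (by linarith)] at hr
    left; intro hcon
    nlinarith [hr.1, hr.2]
  have h2 : IntervalIntegrable (fun r => r ^ (k-1) * (R^2 - r^2) ^ (γ-1)) volume (R/2) R := by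
    have hbase : IntervalIntegrable (fun r => (R - r) ^ (γ-1)) volume (R/2) R := by
      have := (intervalIntegrable_rpow' (r := γ-1) (by linarith) (a := R/2) (b := 0)).comp_sub_left R
      have e : R - R / 2 = R / 2 := by ring
      rwa [sub_zero, e] at this
    have hmul : IntervalIntegrable
        (fun r => (r ^ (k-1) * (R + r) ^ (γ-1)) * (R - r) ^ (γ-1)) volume (R/2) R := by
      apply hbase.continuousOn_mul
      apply ContinuousOn.mul (by fun_prop)
      apply ContinuousOn.rpow_const (by fun_prop)
      intro r hr
      rw [Set.uIcc_of_le (by linarith)] at hr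
      left; intro hcon
      nlinarith [hr.1, hr.2]
    rw [intervalIntegrable_iff] at hmul ⊢
    apply hmul.congr_fun ?_ measurableSet_uIoc
    intro r hr
    rw [Set.uIoc_of_le (by linarith)] at hr
    have h1 : (0:ℝ) ≤ R - r := by linarith [hr.2]
    have h2 : (0:ℝ) ≤ R + r := by linarith [hr.1]
    simp only
    rw [show R^2 - r^2 = (R - r) * (R + r) by ring, Real.mul_rpow h1 h2]
    ring
  exact h1.trans h2

lemma radial_value {k : ℕ} (hk : 1 ≤ k) {γ R : ℝ} (hγ : 0 < γ) (hR : 0 < R) :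
    ∫ r in (0:ℝ)..R, r ^ (k-1) * (R^2 - r^2) ^ (γ-1)
      = (R^2) ^ ((k:ℝ)/2 + γ - 1) / 2
        * (Real.Gamma ((k:ℝ)/2) * Real.Gamma γ / Real.Gamma ((k:ℝ)/2 + γ)) := by
  have hk2 : (0:ℝ) < (k:ℝ)/2 := by positivity
  have hR2 : (0:ℝ) < R^2 := by positivity
  set g : ℝ → ℝ := fun u => (1/2) * (u ^ ((k:ℝ)/2 - 1) * (R^2 - u) ^ (γ-1)) with hg
  have ptw : ∀ x : ℝ, 0 < x → (2*x) • g (x^2) = x ^ (k-1) * (R^2 - x^2)^(γ-1) := by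
    intro x hx
    have hx0 : (0:ℝ) ≤ x := hx.le
    have e1 : (x^2 : ℝ) ^ ((k:ℝ)/2 - 1) = x ^ ((k:ℝ) - 2) := by
      rw [← Real.rpow_natCast x 2, ← Real.rpow_mul hx0]
      norm_num
      congr 1
      ring
    have e2 : (x : ℝ) ^ (k-1) = x ^ ((k:ℝ) - 1) := by
      rw [← Real.rpow_natCast x (k-1), Nat.cast_sub hk, Nat.cast_one]
    simp only [hg, smul_eq_mul]
    rw [e1, e2, show (k:ℝ) - 1 = 1 + ((k:ℝ) - 2) by ring, Real.rpow_add hx, Real.rpow_one]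
    ring
  have key : (∫ x in (0:ℝ)..R, (2*x) • g (x^2)) = ∫ u in ((0:ℝ)^2)..(R^2), g u := by
    refine intervalIntegral.integral_comp_smul_deriv''' (f := fun x => x^2) (f' := fun x => 2*x) (g := g) ?_ ?_ ?_ ?_ ?_
    · fun_prop
    · intro x hx
      simpa [mul_comm] using (hasDerivAt_pow 2 x).hasDerivWithinAt
    · rw [min_eq_left hR.le, max_eq_right hR.le]
      apply ContinuousOn.mul continuousOn_const
      apply ContinuousOn.mul
      · apply ContinuousOn.rpow_const (by fun_prop)
        rintro u ⟨x, hx, rfl⟩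
        left
        have := hx.1
        positivity
      · apply ContinuousOn.rpow_const (by fun_prop)
        rintro u ⟨x, hx, rfl⟩
        left; intro hcon
        have hcon' : R^2 - x^2 = 0 := hcon
        have h1 := hx.1; have h2 := hx.2
        nlinarith
    · have hint := beta_integrable hk2 hγ hR2
      rw [intervalIntegrable_iff'] at hint
      have himg : (fun x : ℝ => x^2) '' (Set.uIcc 0 R) ⊆ Set.uIcc 0 (R^2) := by
        rintro u ⟨x, hx, rfl⟩
        rw [Set.uIcc_of_le hR.le] at hx
        rw [Set.uIcc_of_le hR2.le]
        constructor
        · positivity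
        · show x^2 ≤ R^2
          nlinarith [hx.1, hx.2]
      have h2 := (hint.mono_set himg).const_mul (1/2 : ℝ)
      exact h2
    · rw [Set.uIcc_of_le hR.le, integrableOn_Icc_iff_integrableOn_Ioc]
      have hint := radial_integrable hk hγ hR
      rw [intervalIntegrable_iff, Set.uIoc_of_le hR.le] at hint
      exact hint.congr_fun (fun x hx => (ptw x hx.1).symm) measurableSet_Ioc
  have lhs_eq : (∫ r in (0:ℝ)..R, r ^ (k-1) * (R^2 - r^2) ^ (γ-1))
      = ∫ x in (0:ℝ)..R, (2*x) • g (x^2) := by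
    rw [intervalIntegral.integral_of_le hR.le, intervalIntegral.integral_of_le hR.le]
    exact setIntegral_congr_fun measurableSet_Ioc fun x hx => (ptw x hx.1).symm
  rw [lhs_eq, key, show ((0:ℝ)^2) = 0 by norm_num]
  have : (∫ u in (0:ℝ)..(R^2), g u)
      = (1/2) * ∫ u in (0:ℝ)..(R^2), u ^ ((k:ℝ)/2 - 1) * (R^2 - u) ^ (γ-1) := by
    rw [← intervalIntegral.integral_const_mul]
  rw [this, real_beta_scaled hk2 hγ hR2]
  ring

lemma ball_integral {k : ℕ} (hk : 1 ≤ k) {γ S : ℝ} (hγ : 0 < γ) (hS : 0 < S) :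
    ∫ y in Metric.ball (0 : EuclideanSpace ℝ (Fin k)) (Real.sqrt S), (S - ‖y‖^2) ^ (γ-1)
      = Real.pi ^ ((k:ℝ)/2) * Real.Gamma γ / Real.Gamma (γ + (k:ℝ)/2)
        * S ^ (γ - 1 + (k:ℝ)/2) := by
  haveI : Nonempty (Fin k) := ⟨⟨0, hk⟩⟩
  haveI : Nontrivial (EuclideanSpace ℝ (Fin k)) := inferInstance
  set R := Real.sqrt S with hRdef
  have hR : 0 < R := Real.sqrt_pos.mpr hS
  have hRS : R^2 = S := Real.sq_sqrt hS.le
  set f : ℝ → ℝ := Set.indicator (Set.Iio R) (fun r => (S - r^2) ^ (γ-1)) with hf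
  have step1 : (∫ y in Metric.ball (0 : EuclideanSpace ℝ (Fin k)) R, (S - ‖y‖^2) ^ (γ-1))
      = ∫ y : EuclideanSpace ℝ (Fin k), f ‖y‖ := by
    rw [← MeasureTheory.integral_indicator measurableSet_ball]
    congr 1
    ext y
    rw [hf]
    by_cases h : ‖y‖ < R
    · rw [Set.indicator_of_mem (mem_ball_zero_iff.mpr h),
        Set.indicator_of_mem (by exact h)]
    · rw [Set.indicator_of_notMem (fun hc => h (mem_ball_zero_iff.mp hc)),
        Set.indicator_of_notMem (by exact h)]
  have step2 := MeasureTheory.integral_fun_norm_addHaar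
      (volume : Measure (EuclideanSpace ℝ (Fin k))) f
  rw [finrank_euclideanSpace_fin] at step2
  -- radial integral
  have step3 : (∫ r in Set.Ioi (0:ℝ), r ^ (k-1) • f r)
      = ∫ r in (0:ℝ)..R, r ^ (k-1) * (R^2 - r^2) ^ (γ-1) := by
    have : ∀ r : ℝ, r ^ (k-1) • f r
        = Set.indicator (Set.Iio R) (fun r => r ^ (k-1) * (S - r^2) ^ (γ-1)) r := by
      intro r
      by_cases h : r ∈ Set.Iio R
      · rw [hf, Set.indicator_of_mem h, Set.indicator_of_mem h, smul_eq_mul]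
      · rw [hf, Set.indicator_of_notMem h, Set.indicator_of_notMem h, smul_zero]
    simp_rw [this]
    rw [MeasureTheory.integral_indicator measurableSet_Iio,
      Measure.restrict_restrict measurableSet_Iio,
      show Set.Iio R ∩ Set.Ioi 0 = Set.Ioo 0 R by rw [Set.inter_comm, Set.Ioi_inter_Iio],
      intervalIntegral.integral_of_le hR.le, ← MeasureTheory.integral_Ioc_eq_integral_Ioo, hRS]
  have vol_ball : (volume (Metric.ball (0 : EuclideanSpace ℝ (Fin k)) 1)).toReal
      = Real.pi ^ ((k:ℝ)/2) / Real.Gamma ((k:ℝ)/2 + 1) := by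
    rw [EuclideanSpace.volume_ball]
    simp only [Fintype.card_fin]
    rw [ENNReal.ofReal_one, one_pow, one_mul, ENNReal.toReal_ofReal (by positivity)]
    congr 1
    rw [← Real.rpow_natCast (Real.sqrt Real.pi) k, Real.sqrt_eq_rpow,
      ← Real.rpow_mul Real.pi_pos.le]
    ring_nf
  rw [step1, step2, step3, radial_value hk hγ hR, measureReal_def, vol_ball, hRS]
  have hΓk : Real.Gamma ((k:ℝ)/2 + 1) = ((k:ℝ)/2) * Real.Gamma ((k:ℝ)/2) :=
    Real.Gamma_add_one (by positivity)
  have hΓkpos : 0 < Real.Gamma ((k:ℝ)/2) := Real.Gamma_pos_of_pos (by positivity)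
  have hΓgkpos : 0 < Real.Gamma ((k:ℝ)/2 + γ) := Real.Gamma_pos_of_pos (by positivity)
  have hkpos : (0:ℝ) < k := by exact_mod_cast hk
  rw [hΓk, nsmul_eq_mul, show γ + (k:ℝ)/2 = (k:ℝ)/2 + γ by ring,
    show γ - 1 + (k:ℝ)/2 = (k:ℝ)/2 + γ - 1 by ring]
  field_simp
  ring_nf
  field_simp [hkpos.ne', hΓkpos.ne', hΓgkpos.ne']

/-- the `m`-dimensional marginal of the `d`-dimensional EPD density, obtained
by integrating out the last `d - m` coordinates, has the same form with `γ` replaced by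
`γ + (d-m)/2`. -/
theorem epd_density_marginal (d m : ℕ) (hm : 1 ≤ m) (hmd : m < d) (γ c t : ℝ)
    (hγ : 0 < γ) (hc : 0 < c) (ht : 0 < t)
    (x : EuclideanSpace ℝ (Fin m)) (hx : ‖x‖ < c * t) :
    ∫ y in Metric.ball (0 : EuclideanSpace ℝ (Fin (d - m)))
        (Real.sqrt (c ^ 2 * t ^ 2 - ‖x‖ ^ 2)),
      Real.Gamma (γ + d / 2) / (Real.pi ^ ((d : ℝ) / 2) * Real.Gamma γ)
        * (c * t) ^ (-((d : ℝ) - 2 + 2 * γ))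
        * (c ^ 2 * t ^ 2 - ‖x‖ ^ 2 - ‖y‖ ^ 2) ^ (γ - 1)
      = Real.Gamma (γ + d / 2)
          / (Real.Gamma (γ + ((d : ℝ) - m) / 2) * Real.pi ^ ((m : ℝ) / 2))
        * (c ^ 2 * t ^ 2 - ‖x‖ ^ 2) ^ (γ - 1 + ((d : ℝ) - m) / 2)
        / (c * t) ^ (2 * γ + (d : ℝ) - 2) := by
  have hct : 0 < c * t := mul_pos hc ht
  have hS : 0 < c ^ 2 * t ^ 2 - ‖x‖ ^ 2 := by nlinarith [norm_nonneg x]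
  have hk : 1 ≤ d - m := by omega
  have hcast : ((d - m : ℕ) : ℝ) = (d : ℝ) - m := by
    push_cast [Nat.cast_sub hmd.le]; ring
  rw [MeasureTheory.integral_const_mul, ball_integral hk hγ hS, hcast]
  have hΓγ : 0 < Real.Gamma γ := Real.Gamma_pos_of_pos hγ
  have hΓ2 : 0 < Real.Gamma (γ + ((d:ℝ) - m)/2) :=
    Real.Gamma_pos_of_pos (by
      have h2 : (m:ℝ) < d := by exact_mod_cast hmd
      linarith)
  have hpid : (0:ℝ) < Real.pi ^ ((d:ℝ)/2) := Real.rpow_pos_of_pos Real.pi_pos _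
  have hpim : (0:ℝ) < Real.pi ^ ((m:ℝ)/2) := Real.rpow_pos_of_pos Real.pi_pos _
  have hpik : (0:ℝ) < Real.pi ^ (((d:ℝ) - m)/2) := Real.rpow_pos_of_pos Real.pi_pos _
  have hctp : (0:ℝ) < (c*t) ^ (2*γ + (d:ℝ) - 2) := Real.rpow_pos_of_pos hct _
  have hneg : (c*t) ^ (-((d:ℝ) - 2 + 2*γ)) = ((c*t) ^ (2*γ + (d:ℝ) - 2))⁻¹ := by
    rw [show -((d:ℝ) - 2 + 2*γ) = -(2*γ + (d:ℝ) - 2) by ring, Real.rpow_neg hct.le]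
  have hpisplit : Real.pi ^ ((d:ℝ)/2) = Real.pi ^ (((d:ℝ) - m)/2) * Real.pi ^ ((m:ℝ)/2) := by
    rw [← Real.rpow_add Real.pi_pos]
    congr 1
    ring
  have key : Real.Gamma (γ + (d:ℝ)/2)
        / (Real.pi ^ (((d:ℝ) - m)/2) * Real.pi ^ ((m:ℝ)/2) * Real.Gamma γ)
      * (Real.pi ^ (((d:ℝ) - m)/2) * Real.Gamma γ / Real.Gamma (γ + ((d:ℝ) - m)/2)
          * (c ^ 2 * t ^ 2 - ‖x‖ ^ 2) ^ (γ - 1 + ((d:ℝ) - m)/2))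
      = Real.Gamma (γ + (d:ℝ)/2) / (Real.Gamma (γ + ((d:ℝ) - m)/2) * Real.pi ^ ((m:ℝ)/2))
        * (c ^ 2 * t ^ 2 - ‖x‖ ^ 2) ^ (γ - 1 + ((d:ℝ) - m)/2) := by
    have gen : ∀ (A P Pm G N Z : ℝ), P ≠ 0 → G ≠ 0 → Pm ≠ 0 → N ≠ 0 →
        A / (P * Pm * G) * (P * G / N * Z) = A / (N * Pm) * Z := by
      intros A P Pm G N Z hP hG hPm hN
      field_simp
    exact gen _ _ _ _ _ _ hpik.ne' hΓγ.ne' hpim.ne' hΓ2.ne'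
  rw [hneg, hpisplit, mul_right_comm, key, ← div_eq_mul_inv]
end

section
/- For c > 0, λ > 0, t > 0, the two-dimensional density q(x,y) = (λ/(2πc·sinh(λt))) · cosh((λ/c)√(c²t² - x² - y²)) / √(c²t² - x² - y²) integrates to 1 over the open disc {(x,y) : x² + y² < c²t²}. Equivalently, Σ_{n≥0} ∫∫_{x²+y²<c²t²} ((2n+1)/(2π(ct)^{2n+1}))·(c²t² - x² - y²)^{n - 1/2} dx dy · (2(λt)^{2n+1}e^{-λt}/((1-e^{-2λt})(2n+1)!)) = 1. -/
open Real MeasureTheory Set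


lemma ftc_aux {F f : ℝ → ℝ} {R : ℝ} (hR : 0 < R)
    (hcont : ContinuousOn F (Set.Icc 0 R))
    (hderiv : ∀ x ∈ Set.Ioo 0 R, HasDerivAt F (f x) x)
    (hpos : ∀ x ∈ Set.Ioo 0 R, 0 ≤ f x) :
    ∫ x in (0:ℝ)..R, f x = F R - F 0 := by
  have hint : IntervalIntegrable f volume 0 R := by
    rw [intervalIntegrable_iff_integrableOn_Ioc_of_le hR.le]
    exact intervalIntegral.integrableOn_deriv_of_nonneg hcont hderiv hpos
  exact intervalIntegral.integral_eq_sub_of_hasDeriv_right_of_le hR.le hcont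
    (fun x hx => (hderiv x hx).hasDerivWithinAt) hint

lemma radial_integral (G : ℝ → ℝ) (R : ℝ) (hR : 0 < R)
    (hG : ∀ u, R ^ 2 ≤ u → G u = 0) :
    ∫ p in {p : ℝ × ℝ | p.1 ^ 2 + p.2 ^ 2 < R ^ 2}, G (p.1 ^ 2 + p.2 ^ 2)
      = (∫ r in (0:ℝ)..R, r * G (r ^ 2)) * (2 * π) := by
  have h1 : ∫ p in {p : ℝ × ℝ | p.1 ^ 2 + p.2 ^ 2 < R ^ 2}, G (p.1 ^ 2 + p.2 ^ 2)
      = ∫ p : ℝ × ℝ, G (p.1 ^ 2 + p.2 ^ 2) := by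
    apply setIntegral_eq_integral_of_forall_compl_eq_zero
    intro p hp
    exact hG _ (not_lt.1 hp)
  rw [h1, ← integral_comp_polarCoord_symm]
  have h2 : ∀ p : ℝ × ℝ, p.1 • G ((polarCoord.symm p).1 ^ 2 + (polarCoord.symm p).2 ^ 2)
      = (fun r => r * G (r ^ 2)) p.1 * (fun _ : ℝ => (1:ℝ)) p.2 := by
    intro p
    have : (polarCoord.symm p).1 ^ 2 + (polarCoord.symm p).2 ^ 2 = p.1 ^ 2 := by
      show (p.1 * cos p.2) ^ 2 + (p.1 * sin p.2) ^ 2 = p.1 ^ 2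
      have := sin_sq_add_cos_sq p.2
      nlinarith [this]
    rw [this]; simp [smul_eq_mul]
  simp only [h2]
  have htarget : polarCoord.target = Set.Ioi (0:ℝ) ×ˢ Set.Ioo (-π) π := rfl
  rw [htarget, Measure.volume_eq_prod]
  have h5 := setIntegral_prod_mul (μ := (volume : Measure ℝ)) (ν := (volume : Measure ℝ))
    (fun r : ℝ => r * G (r ^ 2)) (fun _ : ℝ => (1:ℝ)) (Set.Ioi 0) (Set.Ioo (-π) π)
  beta_reduce at h5
  rw [h5]
  have h3 : (∫ _ in Set.Ioo (-π) π, (1:ℝ)) = 2 * π := by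
    rw [setIntegral_const, Real.volume_real_Ioo_of_le (by linarith [pi_pos] : -π ≤ π),
      smul_eq_mul, mul_one]
    ring
  rw [h3]
  congr 1
  have h4 : ∫ r in Set.Ioi (0:ℝ), r * G (r ^ 2)
      = ∫ r in Set.Ioc (0:ℝ) R, r * G (r ^ 2) := by
    apply setIntegral_eq_of_subset_of_forall_diff_eq_zero measurableSet_Ioi
      (fun x hx => hx.1)
    intro x hx
    simp only [Set.mem_diff, Set.mem_Ioi, Set.mem_Ioc, not_and, not_le] at hx
    have hxR : R < x := hx.2 hx.1
    have : R ^ 2 ≤ x ^ 2 := by nlinarith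
    rw [hG _ this, mul_zero]
  rw [h4, ← intervalIntegral.integral_of_le hR.le]

lemma aux_inner_integral_eq_one (c t : ℝ) (hc : 0 < c) (ht : 0 < t) (n : ℕ) :
    (∫ p in {p : ℝ × ℝ | p.1 ^ 2 + p.2 ^ 2 < c ^ 2 * t ^ 2},
          ((2 * n + 1 : ℝ) / (2 * Real.pi * (c * t) ^ (2 * n + 1)))
            * (c ^ 2 * t ^ 2 - p.1 ^ 2 - p.2 ^ 2) ^ ((n : ℝ) - 1 / 2)) = 1 := by
  set R : ℝ := c * t with hRdef
  have hR : 0 < R := mul_pos hc ht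
  set α : ℝ := (n : ℝ) - 1 / 2 with hαdef
  have hα1 : 0 < α + 1 := by
    rw [hαdef]
    have : (0:ℝ) ≤ n := Nat.cast_nonneg n
    linarith
  have hαne : α ≠ 0 := by
    rw [hαdef]
    intro h
    have h2 : (2 * (n:ℝ)) = 1 := by linarith
    have : ((2 * n : ℕ) : ℝ) = ((1 : ℕ) : ℝ) := by push_cast; linarith
    have := Nat.cast_injective this
    omega
  set D : ℝ := (2 * n + 1 : ℝ) / (2 * Real.pi * R ^ (2 * n + 1)) with hDdef
  have hD : 0 < D := by rw [hDdef]; positivity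
  set G : ℝ → ℝ := fun u => D * (R ^ 2 - u) ^ α with hGdef
  clear_value R α D G
  have hct : c ^ 2 * t ^ 2 = R ^ 2 := by rw [hRdef]; ring
  rw [show {p : ℝ × ℝ | p.1 ^ 2 + p.2 ^ 2 < c ^ 2 * t ^ 2}
      = {p : ℝ × ℝ | p.1 ^ 2 + p.2 ^ 2 < R ^ 2} by rw [hct]]
  have hstate : ∫ p in {p : ℝ × ℝ | p.1 ^ 2 + p.2 ^ 2 < R ^ 2},
        D * (c ^ 2 * t ^ 2 - p.1 ^ 2 - p.2 ^ 2) ^ α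
      = ∫ p in {p : ℝ × ℝ | p.1 ^ 2 + p.2 ^ 2 < R ^ 2}, G (p.1 ^ 2 + p.2 ^ 2) := by
    apply setIntegral_congr_fun
    · exact measurableSet_lt (by fun_prop) measurable_const
    · intro p _
      simp only [hGdef]
      rw [hct]
      congr 2
      ring
  rw [hstate]
  have hG0 : ∀ u, R ^ 2 ≤ u → G u = 0 := by
    intro u hu
    rcases eq_or_lt_of_le hu with h | h
    · simp [hGdef, ← h, Real.zero_rpow hαne]
    · have hneg : R ^ 2 - u < 0 := by linarith
      rw [hGdef]
      simp only
      rw [Real.rpow_def_of_neg hneg]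
      have : Real.cos (α * π) = 0 := by
        rw [Real.cos_eq_zero_iff]
        exact ⟨(n : ℤ) - 1, by push_cast [hαdef]; ring⟩
      rw [this, mul_zero, mul_zero]
  rw [radial_integral G R hR hG0]
  have hftc : ∫ r in (0:ℝ)..R, r * G (r ^ 2)
      = (fun r => -(D / (2 * α + 2)) * (R ^ 2 - r ^ 2) ^ (α + 1)) R
        - (fun r => -(D / (2 * α + 2)) * (R ^ 2 - r ^ 2) ^ (α + 1)) 0 := by
    apply ftc_aux (F := fun r => -(D / (2 * α + 2)) * (R ^ 2 - r ^ 2) ^ (α + 1))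
      (f := fun r => r * G (r ^ 2)) hR
    · apply Continuous.continuousOn
      apply Continuous.mul continuous_const
      exact (continuous_const.sub (continuous_pow 2)).rpow_const (fun x => Or.inr hα1.le)
    · intro x hx
      obtain ⟨hx0, hxR⟩ := hx
      have hb : 0 < R ^ 2 - x ^ 2 := by nlinarith
      have h1 : HasDerivAt (fun r : ℝ => R ^ 2 - r ^ 2) (-(2 * x ^ 1)) x :=
        (hasDerivAt_pow 2 x).const_sub (R ^ 2)
      have h2 : HasDerivAt (fun y : ℝ => y ^ (α + 1))
          ((α + 1) * (R ^ 2 - x ^ 2) ^ (α + 1 - 1)) (R ^ 2 - x ^ 2) :=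
        Real.hasDerivAt_rpow_const (Or.inl hb.ne')
      have h3 := (h2.comp x h1).const_mul (-(D / (2 * α + 2)))
      refine h3.congr_deriv ?_
      symm
      simp only [hGdef]
      have h6 : α + 1 - 1 = α := by ring
      rw [h6]
      have h7 : (2 * α + 2) ≠ 0 := by linarith
      field_simp
    · intro x hx
      have : 0 ≤ G (x ^ 2) := by
        rw [hGdef]
        have : (0:ℝ) ≤ (R ^ 2 - x ^ 2) ^ α := Real.rpow_nonneg (by nlinarith [hx.1, hx.2]) α
        positivity
      exact mul_nonneg hx.1.le this
  rw [hftc]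
  have e1 : R ^ 2 - R ^ 2 = 0 := sub_self _
  have e2 : R ^ 2 - 0 ^ 2 = R ^ 2 := by ring
  simp only [e1, e2, Real.zero_rpow (by linarith : α + 1 ≠ 0)]
  have e3 : (R ^ 2) ^ (α + 1) = R ^ (2 * n + 1) := by
    rw [← Real.rpow_natCast R 2, ← Real.rpow_mul hR.le]
    rw [show (((2:ℕ)):ℝ) * (α + 1) = ((2 * n + 1 : ℕ) : ℝ) by push_cast [hαdef]; ring]
    exact Real.rpow_natCast R (2 * n + 1)
  rw [e3, hDdef]
  have h2α : 2 * α + 2 = 2 * (n:ℝ) + 1 := by rw [hαdef]; ring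
  rw [h2α]
  have hRpow : (0:ℝ) < R ^ (2 * n + 1) := pow_pos hR _
  have h2n1 : (2 * (n:ℝ) + 1) ≠ 0 := by positivity
  field_simp
  ring

/-- the law of the planar random motion with changes of direction at
odd-order Poisson times integrates to 1 on the disc, both in closed form and as the
mixture of conditional densities. -/
theorem planar_odd_motion_density_integrates_to_one (c lam t : ℝ)
    (hc : 0 < c) (hlam : 0 < lam) (ht : 0 < t) :
    (∫ p in {p : ℝ × ℝ | p.1 ^ 2 + p.2 ^ 2 < c ^ 2 * t ^ 2},
        lam / (2 * Real.pi * c * Real.sinh (lam * t))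
          * Real.cosh (lam / c * Real.sqrt (c ^ 2 * t ^ 2 - p.1 ^ 2 - p.2 ^ 2))
          / Real.sqrt (c ^ 2 * t ^ 2 - p.1 ^ 2 - p.2 ^ 2) = 1) ∧
    (∑' n : ℕ,
        (∫ p in {p : ℝ × ℝ | p.1 ^ 2 + p.2 ^ 2 < c ^ 2 * t ^ 2},
          ((2 * n + 1 : ℝ) / (2 * Real.pi * (c * t) ^ (2 * n + 1)))
            * (c ^ 2 * t ^ 2 - p.1 ^ 2 - p.2 ^ 2) ^ ((n : ℝ) - 1 / 2))
          * (2 * (lam * t) ^ (2 * n + 1) * Real.exp (-(lam * t))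
              / ((1 - Real.exp (-(2 * lam * t))) * (Nat.factorial (2 * n + 1) : ℝ)))
      = 1) := by
  constructor
  · set R : ℝ := c * t with hRdef
    have hR : 0 < R := mul_pos hc ht
    set C : ℝ := lam / (2 * Real.pi * c * Real.sinh (lam * t)) with hCdef
    set k : ℝ := lam / c with hkdef
    have hsinh : 0 < Real.sinh (lam * t) := Real.sinh_pos_iff.2 (mul_pos hlam ht)
    set G : ℝ → ℝ := fun u => C * Real.cosh (k * Real.sqrt (R ^ 2 - u)) / Real.sqrt (R ^ 2 - u)
      with hGdef
    have hct : c ^ 2 * t ^ 2 = R ^ 2 := by rw [hRdef]; ring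
    have hstate : ∫ p in {p : ℝ × ℝ | p.1 ^ 2 + p.2 ^ 2 < c ^ 2 * t ^ 2},
          lam / (2 * Real.pi * c * Real.sinh (lam * t))
            * Real.cosh (lam / c * Real.sqrt (c ^ 2 * t ^ 2 - p.1 ^ 2 - p.2 ^ 2))
            / Real.sqrt (c ^ 2 * t ^ 2 - p.1 ^ 2 - p.2 ^ 2)
        = ∫ p in {p : ℝ × ℝ | p.1 ^ 2 + p.2 ^ 2 < R ^ 2}, G (p.1 ^ 2 + p.2 ^ 2) := by
      rw [hct]
      apply setIntegral_congr_fun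
      · exact measurableSet_lt (by fun_prop) measurable_const
      · intro p _
        have : R ^ 2 - (p.1 ^ 2 + p.2 ^ 2) = R ^ 2 - p.1 ^ 2 - p.2 ^ 2 := by ring
        simp only [hGdef, this]
        rfl
    rw [hstate]
    have hG0 : ∀ u, R ^ 2 ≤ u → G u = 0 := by
      intro u hu
      have : Real.sqrt (R ^ 2 - u) = 0 := Real.sqrt_eq_zero'.2 (by linarith)
      simp [hGdef, this]
    rw [radial_integral G R hR hG0]
    have hftc : ∫ r in (0:ℝ)..R, r * G (r ^ 2)
        = (fun r => -(C * c / lam) * Real.sinh (k * Real.sqrt (R ^ 2 - r ^ 2))) R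
          - (fun r => -(C * c / lam) * Real.sinh (k * Real.sqrt (R ^ 2 - r ^ 2))) 0 := by
      apply ftc_aux (F := fun r => -(C * c / lam) * Real.sinh (k * Real.sqrt (R ^ 2 - r ^ 2)))
        (f := fun r => r * G (r ^ 2)) hR
      · apply Continuous.continuousOn
        fun_prop
      · intro x hx
        obtain ⟨hx0, hxR⟩ := hx
        have hb : 0 < R ^ 2 - x ^ 2 := by nlinarith
        have hs : 0 < Real.sqrt (R ^ 2 - x ^ 2) := Real.sqrt_pos.2 hb
        have h1 : HasDerivAt (fun r : ℝ => R ^ 2 - r ^ 2) (-(2 * x ^ 1)) x :=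
          (hasDerivAt_pow 2 x).const_sub (R ^ 2)
        have h2 : HasDerivAt (fun r : ℝ => Real.sqrt (R ^ 2 - r ^ 2))
            (1 / (2 * Real.sqrt (R ^ 2 - x ^ 2)) * (-(2 * x ^ 1))) x :=
          (Real.hasDerivAt_sqrt hb.ne').comp x h1
        have h3 := (h2.const_mul k)
        have h4 := ((Real.hasDerivAt_sinh (k * Real.sqrt (R ^ 2 - x ^ 2))).comp x h3).const_mul
          (-(C * c / lam))
        refine h4.congr_deriv ?_
        symm
        simp only [hGdef]
        have hsq : Real.sqrt (R ^ 2 - x ^ 2) ^ 2 = R ^ 2 - x ^ 2 := Real.sq_sqrt hb.le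
        field_simp [hkdef]
        rw [hkdef, mul_assoc, div_mul_cancel₀ _ hc.ne']
      · intro x hx
        have hC : 0 < C := by
          rw [hCdef]; positivity
        have : 0 ≤ G (x ^ 2) := by
          rw [hGdef]
          positivity
        exact mul_nonneg hx.1.le this
    rw [hftc]
    have e1 : R ^ 2 - R ^ 2 = 0 := sub_self _
    have e2 : R ^ 2 - 0 ^ 2 = R ^ 2 := by ring
    simp only [e1, e2, Real.sqrt_zero, Real.sqrt_sq hR.le, mul_zero, Real.sinh_zero, hkdef]
    have e3 : lam / c * R = lam * t := by rw [hRdef]; field_simp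
    rw [e3, hCdef]
    field_simp
    ring
  · have hx : 0 < lam * t := mul_pos hlam ht
    have hsinh : 0 < Real.sinh (lam * t) := Real.sinh_pos_iff.2 hx
    have key : 1 - Real.exp (-(2 * lam * t))
        = 2 * Real.exp (-(lam * t)) * Real.sinh (lam * t) := by
      rw [Real.sinh_eq, show -(2 * lam * t) = -(lam * t) + -(lam * t) by ring, Real.exp_add,
        Real.exp_neg]
      field_simp [Real.exp_ne_zero]
    have hterm : ∀ n : ℕ,
        (∫ p in {p : ℝ × ℝ | p.1 ^ 2 + p.2 ^ 2 < c ^ 2 * t ^ 2},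
          ((2 * n + 1 : ℝ) / (2 * Real.pi * (c * t) ^ (2 * n + 1)))
            * (c ^ 2 * t ^ 2 - p.1 ^ 2 - p.2 ^ 2) ^ ((n : ℝ) - 1 / 2))
          * (2 * (lam * t) ^ (2 * n + 1) * Real.exp (-(lam * t))
              / ((1 - Real.exp (-(2 * lam * t))) * (Nat.factorial (2 * n + 1) : ℝ)))
        = (lam * t) ^ (2 * n + 1) / (Nat.factorial (2 * n + 1) : ℝ) / Real.sinh (lam * t) := by
      intro n
      rw [aux_inner_integral_eq_one c t hc ht n, key, one_mul]
      have hfac : ((Nat.factorial (2 * n + 1) : ℝ)) ≠ 0 :=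
        Nat.cast_ne_zero.2 (Nat.factorial_ne_zero _)
      field_simp [Real.exp_ne_zero, hsinh.ne']
    rw [tsum_congr hterm, ((Real.hasSum_sinh (lam * t)).div_const (Real.sinh (lam * t))).tsum_eq,
      div_self hsinh.ne']
end
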